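/- arXiv:2305.01875 — 5 statements merged into one kernel-verified Lean document; each statement's English description precedes it below -/
import Mathlib

section
/- Let p ≥ q ≥ 1 and p' ≥ q' ≥ 1 be integers and let f : D_{p,q} → D_{p',q'} be a proper holomorphic map. Suppose there exist a point P in the Shilov boundary S₀(D_{p,q}) and an open neighborhood U ⊆ M_{p×q}(ℂ) of P such that f extends C² to U, and suppose f maps S₀(D_{p,q}) ∩ U into S₀(D_{p',q'}). Then there is a dense subset W of S₀(D_{p,q}) ∩ U such that for every x ∈ W, the set of matrices v ∈ M_{p×q}(ℂ) for which the matrix rank of Df(x)(v) equals q' is dense in M_{p×q}(ℂ), where Df(x) is the (real) derivative at x of the C² extension of f, a complex-linear map M_{p×q}(ℂ) → M_{p'×q'}(ℂ). -/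
open Matrix
open scoped ComplexOrder

open Polynomial Metric Filter
open scoped Topology

attribute [local instance] Matrix.normedAddCommGroup Matrix.normedSpace



private lemma aux_normsq (a w : ℂ) :
    ‖a - w‖ ^ 2 - ‖(starRingEnd ℂ) a + w‖ ^ 2 = -(4 * a.re * w.re) := by
  rw [Complex.sq_norm, Complex.sq_norm]
  simp [Complex.normSq_apply, Complex.sub_re, Complex.sub_im, Complex.add_re, Complex.add_im,
    Complex.conj_re, Complex.conj_im]
  ring

private lemma aux_div_re (z : ℂ) (h1 : 1 + z ≠ 0) :
    (((1 - z) / (1 + z)).re) = (1 - Complex.normSq z) / Complex.normSq (1 + z) := by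
  have h2 : Complex.normSq (1 + z) ≠ 0 := (Complex.normSq_pos.mpr h1).ne'
  rw [Complex.div_re]
  field_simp [Complex.normSq_apply, Complex.sub_re, Complex.sub_im, Complex.add_re,
    Complex.add_im]
  simp only [Complex.sub_re, Complex.sub_im, Complex.add_re, Complex.add_im, Complex.one_re,
    Complex.one_im, Complex.normSq_apply]
  ring

private lemma aux_hopf {a w : ℂ} (ha : 0 < a.re) (hw : 0 < w.re) {r : ℝ} (hr0 : 0 ≤ r)
    (hr1 : r ≤ 1) (hle : ‖a - w‖ ≤ r * ‖(starRingEnd ℂ) a + w‖) :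
    (1 - r ^ 2) * a.re / 4 ≤ w.re := by
  have key := aux_normsq a w
  set N := ‖(starRingEnd ℂ) a + w‖ with hN
  have hN0 : 0 ≤ N := norm_nonneg _
  have h2 : ‖a - w‖ ^ 2 ≤ r ^ 2 * N ^ 2 := by
    nlinarith [norm_nonneg (a - w)]
  have h3 : (1 - r ^ 2) * N ^ 2 ≤ 4 * a.re * w.re := by nlinarith
  have hre : a.re ≤ N := by
    calc a.re ≤ a.re + w.re := by linarith
    _ = ((starRingEnd ℂ) a + w).re := by simp [Complex.add_re, Complex.conj_re]
    _ ≤ N := Complex.re_le_norm _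
  have hr2 : 0 ≤ 1 - r ^ 2 := by nlinarith
  have hsq : a.re ^ 2 ≤ N ^ 2 := by nlinarith [mul_self_le_mul_self ha.le hre]
  have h4 : (1 - r ^ 2) * a.re ^ 2 ≤ (1 - r ^ 2) * N ^ 2 := mul_le_mul_of_nonneg_left hsq hr2
  have h5 : (1 - r ^ 2) * a.re ^ 2 ≤ 4 * a.re * w.re := le_trans h4 h3
  nlinarith

private lemma key_disc {Φ : ℂ → ℂ} (hΦ : DifferentiableOn ℂ Φ (ball 0 1))
    (hlt : ∀ z ∈ ball (0 : ℂ) 1, ‖Φ z‖ < 1) :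
    ∃ c > 0, ∀ r : ℝ, 0 ≤ r → r < 1 → 1 ≤ ‖1 + Φ r‖ → c * (1 - r) ≤ 1 - (Φ r).re := by
  have hne : ∀ z ∈ ball (0 : ℂ) 1, 1 + Φ z ≠ 0 := by
    intro z hz h0
    have he : Φ z = -1 := by linear_combination h0
    have hn := hlt z hz
    rw [he] at hn
    simp at hn
  set h : ℂ → ℂ := fun z => (1 - Φ z) / (1 + Φ z) with hh
  have hhre : ∀ z ∈ ball (0 : ℂ) 1, 0 < (h z).re := by
    intro z hz
    rw [hh]
    simp only
    rw [aux_div_re _ (hne z hz)]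
    apply div_pos
    · have := hlt z hz
      have h2 : Complex.normSq (Φ z) < 1 := by
        rw [Complex.normSq_eq_norm_sq]
        nlinarith [norm_nonneg (Φ z)]
      linarith
    · exact Complex.normSq_pos.mpr (hne z hz)
  have hdiffh : DifferentiableOn ℂ h (ball 0 1) :=
    ((differentiableOn_const 1).sub hΦ).div ((differentiableOn_const 1).add hΦ) hne
  set a := h 0 with ha'
  have h0mem : (0 : ℂ) ∈ ball (0 : ℂ) 1 := mem_ball_self one_pos
  have ha : 0 < a.re := hhre 0 h0mem
  have hdenom : ∀ z ∈ ball (0 : ℂ) 1, (starRingEnd ℂ) a + h z ≠ 0 := by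
    intro z hz h0
    have : ((starRingEnd ℂ) a + h z).re = 0 := by rw [h0]; simp
    rw [Complex.add_re, Complex.conj_re] at this
    have := hhre z hz
    linarith
  set k : ℂ → ℂ := fun z => (a - h z) / ((starRingEnd ℂ) a + h z) with hk
  have hk0 : k 0 = 0 := by rw [hk]; simp [← ha']
  have hkdiff : DifferentiableOn ℂ k (ball 0 1) :=
    ((differentiableOn_const a).sub hdiffh).div
      ((differentiableOn_const ((starRingEnd ℂ) a)).add hdiffh) hdenom
  have hkmaps : Set.MapsTo k (ball 0 1) (ball 0 1) := by
    intro z hz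
    rw [mem_ball_zero_iff]
    have hid := aux_normsq a (h z)
    have hpos : 0 < ‖(starRingEnd ℂ) a + h z‖ := norm_pos_iff.mpr (hdenom z hz)
    have hlt2 : ‖a - h z‖ < ‖(starRingEnd ℂ) a + h z‖ := by
      nlinarith [norm_nonneg (a - h z), hhre z hz, ha]
    rw [hk]
    simp only
    rw [norm_div]
    exact (div_lt_one hpos).mpr hlt2
  refine ⟨a.re / 8, by positivity, fun r hr0 hr1 hnorm => ?_⟩
  have hrmem : ((r : ℂ)) ∈ ball (0 : ℂ) 1 := by
    rw [mem_ball_zero_iff, Complex.norm_real, Real.norm_eq_abs, abs_of_nonneg hr0]; exact hr1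
  have hschwarz : ‖k r‖ ≤ ‖(r : ℂ)‖ :=
    Complex.norm_le_norm_of_mapsTo_ball_self hkdiff (hkmaps.mono_right ball_subset_closedBall) hk0
      (by rw [Complex.norm_real, Real.norm_eq_abs, abs_of_nonneg hr0]; exact hr1)
  have habs : ‖k ↑r‖ ≤ r := by
    calc ‖k r‖ ≤ ‖(r : ℂ)‖ := hschwarz
    _ = r := by rw [Complex.norm_real, Real.norm_eq_abs, abs_of_nonneg hr0]
  have hle : ‖a - h r‖ ≤ r * ‖(starRingEnd ℂ) a + h r‖ := by
    have := habs
    rw [hk] at this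
    simp only at this
    rw [norm_div] at this
    have hpos : 0 < ‖(starRingEnd ℂ) a + h ↑r‖ := norm_pos_iff.mpr (hdenom _ hrmem)
    rwa [div_le_iff₀ hpos] at this
  have hhopf := aux_hopf ha (hhre _ hrmem) hr0 hr1.le hle
  -- translate to Φ
  have hrep : (h ↑r).re = (1 - Complex.normSq (Φ ↑r)) / Complex.normSq (1 + Φ ↑r) :=
    aux_div_re _ (hne _ hrmem)
  have hns1 : 1 ≤ Complex.normSq (1 + Φ ↑r) := by
    rw [Complex.normSq_eq_norm_sq]
    nlinarith
  have hnsΦ : Complex.normSq (Φ ↑r) < 1 := by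
    have := hlt _ hrmem
    rw [Complex.normSq_eq_norm_sq]
    nlinarith [norm_nonneg (Φ ↑r)]
  have h6 : (1 - r ^ 2) * a.re / 4 ≤ 1 - Complex.normSq (Φ ↑r) := by
    rw [hrep] at hhopf
    have hd : 0 < Complex.normSq (1 + Φ ↑r) := by linarith
    rw [le_div_iff₀ hd] at hhopf
    nlinarith [hhopf]
  have h7 : (1 - Complex.normSq (Φ ↑r)) / 2 ≤ 1 - (Φ ↑r).re := by
    have := Complex.normSq_apply (Φ ↑r)
    nlinarith [sq_nonneg ((Φ ↑r).re - 1), sq_nonneg (Φ ↑r).im]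
  have h8 : 1 - r ≤ 1 - r ^ 2 := by nlinarith
  nlinarith [ha]


local notation "⟪" x ", " y "⟫" => @inner ℂ _ _ x y

private noncomputable def toE {n : ℕ} (u : Fin n → ℂ) : EuclideanSpace ℂ (Fin n) :=
  (WithLp.equiv 2 _).symm u

private lemma dot_eq_inner {n : ℕ} (u v : Fin n → ℂ) :
    dotProduct (star u) v = ⟪toE u, toE v⟫ := by
  rw [EuclideanSpace.inner_eq_star_dotProduct]
  exact dotProduct_comm _ _

private lemma dot_self_eq {n : ℕ} (u : Fin n → ℂ) :
    dotProduct (star u) u = ((‖toE u‖ ^ 2 : ℝ) : ℂ) := by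
  rw [dot_eq_inner, inner_self_eq_norm_sq_to_K]
  norm_cast

private lemma helper_WW {m n : ℕ} (W : Matrix (Fin m) (Fin n) ℂ) (v : Fin n → ℂ) :
    dotProduct (star (W *ᵥ v)) (W *ᵥ v) = dotProduct (star v) ((Wᴴ * W) *ᵥ v) := by
  rw [star_mulVec, ← dotProduct_mulVec, mulVec_mulVec]

private lemma helper_sub {m n : ℕ} (W : Matrix (Fin m) (Fin n) ℂ) (v : Fin n → ℂ) :
    dotProduct (star v) ((1 - Wᴴ * W) *ᵥ v)
      = dotProduct (star v) v - dotProduct (star (W *ᵥ v)) (W *ᵥ v) := by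
  rw [sub_mulVec, dotProduct_sub, one_mulVec, helper_WW]

private lemma posdef_norm_lt {m n : ℕ} {W : Matrix (Fin m) (Fin n) ℂ}
    (h : (1 - Wᴴ * W).PosDef) {v : Fin n → ℂ} (hv : v ≠ 0) : ‖toE (W *ᵥ v)‖ < ‖toE v‖ := by
  have h1 := h.dotProduct_mulVec_pos hv
  rw [helper_sub, dot_self_eq, dot_self_eq] at h1
  have h2 : (0 : ℂ) < (((‖toE v‖ ^ 2 - ‖toE (W *ᵥ v)‖ ^ 2 : ℝ)) : ℂ) := by push_cast at h1 ⊢; exact h1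
  rw [Complex.zero_lt_real] at h2
  nlinarith [norm_nonneg (toE (W *ᵥ v)), norm_nonneg (toE v)]

private lemma posdef_of_norm_lt {m n : ℕ} {W : Matrix (Fin m) (Fin n) ℂ}
    (h : ∀ v : Fin n → ℂ, v ≠ 0 → ‖toE (W *ᵥ v)‖ < ‖toE v‖) : (1 - Wᴴ * W).PosDef := by
  refine Matrix.PosDef.of_dotProduct_mulVec_pos ?_ ?_
  · unfold Matrix.IsHermitian
    rw [conjTranspose_sub, conjTranspose_one, conjTranspose_mul, conjTranspose_conjTranspose]
  · intro v hv
    rw [helper_sub, dot_self_eq, dot_self_eq]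
    have := h v hv
    rw [show ((‖toE v‖ ^ 2 : ℝ) : ℂ) - ((‖toE (W *ᵥ v)‖ ^ 2 : ℝ) : ℂ)
        = (((‖toE v‖ ^ 2 - ‖toE (W *ᵥ v)‖ ^ 2 : ℝ)) : ℂ) by push_cast; ring]
    rw [Complex.zero_lt_real]
    nlinarith [norm_nonneg (toE (W *ᵥ v)), norm_nonneg (toE v)]

private lemma dot_self_pos {n : ℕ} {v : Fin n → ℂ} (hv : v ≠ 0) :
    (0 : ℂ) < dotProduct (star v) v := by
  rw [dot_self_eq, Complex.zero_lt_real]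
  have : toE v ≠ 0 := by
    simpa [toE] using hv
  exact pow_pos (norm_pos_iff.mpr this) 2

private lemma dense_rank {p q p' q' : ℕ}
    (L : Matrix (Fin p) (Fin q) ℂ →L[ℝ] Matrix (Fin p') (Fin q') ℂ)
    (x : Matrix (Fin p) (Fin q) ℂ) (hB : ((L x)ᴴ * (L x)).det ≠ 0) :
    Dense {v : Matrix (Fin p) (Fin q) ℂ | (L v).rank = q'} := by
  classical
  refine Metric.dense_iff.mpr ?_
  intro v₀ ε hε
  set B := L x with hBdef
  set A := L v₀ with hAdef
  -- the polynomial
  set Pm : Matrix (Fin q') (Fin q') (Polynomial ℂ) := fun i j =>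
    C ((Bᴴ * B) i j) + C ((Aᴴ * B + Bᴴ * A) i j) * X + C ((Aᴴ * A) i j) * X ^ 2 with hPm
  set pl : Polynomial ℂ := Pm.det with hpl
  have heval0 : pl.eval 0 = (Bᴴ * B).det := by
    have := (evalRingHom (0 : ℂ)).map_det Pm
    simp only [coe_evalRingHom] at this
    rw [hpl, this]
    congr 1
    ext i j
    rw [RingHom.mapMatrix_apply, Matrix.map_apply]
    simp [hPm]
  have hplne : pl ≠ 0 := by
    intro h0
    rw [h0] at heval0
    simp at heval0
    exact hB heval0.symm
  -- finitely many real points where pl vanishes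
  have hfin : {s : ℝ | pl.eval (s : ℂ) = 0}.Finite := by
    have h1 : {s : ℝ | pl.eval (s : ℂ) = 0}
        = ((↑) : ℝ → ℂ) ⁻¹' {z : ℂ | pl.IsRoot z} := rfl
    rw [h1]
    exact (Polynomial.finite_setOf_isRoot hplne).preimage (fun a _ b _ h => by exact_mod_cast h)
  set N : ℝ := max ((‖x‖ + 1) / ε) 1 with hN
  have : (Set.Ioi N).Infinite := Set.Ioi_infinite N
  obtain ⟨s, hsIoi, hsroot⟩ := (this.diff hfin).nonempty
  simp only [Set.mem_diff, Set.mem_Ioi, Set.mem_setOf_eq] at hsIoi hsroot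
  have hs1 : 1 < s := lt_of_le_of_lt (le_max_right _ _) hsIoi
  have hs0 : 0 < s := by linarith
  set t : ℝ := s⁻¹ with ht
  have ht0 : 0 < t := inv_pos.mpr hs0
  set v : Matrix (Fin p) (Fin q) ℂ := v₀ + t • x with hv
  have hdist : dist v v₀ < ε := by
    rw [hv, dist_eq_norm, add_sub_cancel_left, norm_smul, Real.norm_eq_abs, abs_of_pos ht0]
    have h2 : (‖x‖ + 1) / ε < s := lt_of_le_of_lt (le_max_left _ _) hsIoi
    have h4 : ‖x‖ + 1 < s * ε := (div_lt_iff₀ hε).mp h2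
    have hst : s * t = 1 := mul_inv_cancel₀ hs0.ne'
    nlinarith [norm_nonneg x, mul_pos ht0 hε]
  refine ⟨v, Metric.mem_ball.mpr hdist, ?_⟩
  -- now rank
  set u : ℂ := (t : ℂ) with hu
  have hune : u ≠ 0 := by simp [hu, ht0.ne']
  have hLv : L v = A + u • B := by
    rw [hv, map_add, L.map_smul]
    congr 1
  have hstar : star u = u := by rw [hu]; exact Complex.conj_ofReal t
  have hconj : (L v)ᴴ = Aᴴ + u • Bᴴ := by
    rw [hLv, conjTranspose_add, conjTranspose_smul, hstar]
  have hMM : (L v)ᴴ * (L v)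
      = Aᴴ * A + u • (Aᴴ * B) + u • (Bᴴ * A) + (u * u) • (Bᴴ * B) := by
    rw [hLv, conjTranspose_add, conjTranspose_smul, hstar, Matrix.add_mul, Matrix.mul_add,
      Matrix.mul_add, Matrix.smul_mul, Matrix.mul_smul, Matrix.mul_smul, Matrix.smul_mul,
      smul_smul]
    abel
  set Nm : Matrix (Fin q') (Fin q') ℂ :=
    Bᴴ * B + u⁻¹ • (Aᴴ * B + Bᴴ * A) + (u⁻¹ * u⁻¹) • (Aᴴ * A) with hNm
  have e1 : u * u * u⁻¹ = u := by field_simp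
  have e2 : u * u * (u⁻¹ * u⁻¹) = 1 := by field_simp
  have hMN : (L v)ᴴ * (L v) = (u * u) • Nm := by
    rw [hMM, hNm, smul_add, smul_add, smul_smul, smul_smul, e1, e2, one_smul, smul_add]
    abel
  have hNmdet : Nm.det = pl.eval ((s : ℂ)) := by
    have := (evalRingHom ((s : ℂ))).map_det Pm
    simp only [coe_evalRingHom] at this
    rw [hpl, this]
    congr 1
    ext i j
    rw [RingHom.mapMatrix_apply, Matrix.map_apply]
    have hus : u⁻¹ = (s : ℂ) := by
      rw [hu, ht]
      push_cast
      rw [inv_inv]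
    simp only [hNm, hPm, RingHom.mapMatrix_apply, Matrix.map_apply, Matrix.add_apply,
      Matrix.smul_apply, eval_add, eval_mul, eval_C, eval_X, eval_pow, hus, smul_eq_mul,
      coe_evalRingHom]
    ring
  have hdet0 : ((L v)ᴴ * (L v)).det ≠ 0 := by
    rw [hMN, Matrix.det_smul, hNmdet]
    apply mul_ne_zero
    · exact pow_ne_zero _ (mul_ne_zero hune hune)
    · exact hsroot
  have hUnit : IsUnit ((L v)ᴴ * (L v)) :=
    (Matrix.isUnit_iff_isUnit_det _).mpr (Ne.isUnit hdet0)
  show (L v).rank = q'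
  rw [← Matrix.rank_conjTranspose_mul_self (L v), Matrix.rank_of_isUnit _ hUnit, Fintype.card_fin]

private lemma norm_mulVec_eq {m n : ℕ} {x : Matrix (Fin m) (Fin n) ℂ} (hx : xᴴ * x = 1)
    (v : Fin n → ℂ) : ‖toE (x *ᵥ v)‖ = ‖toE v‖ := by
  have h1 : dotProduct (star (x *ᵥ v)) (x *ᵥ v) = dotProduct (star v) v := by
    rw [helper_WW, hx, one_mulVec]
  rw [dot_self_eq, dot_self_eq] at h1
  have h2 : ‖toE (x *ᵥ v)‖ ^ 2 = ‖toE v‖ ^ 2 := by exact_mod_cast h1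
  nlinarith [norm_nonneg (toE (x *ᵥ v)), norm_nonneg (toE v)]

private lemma toE_smul {n : ℕ} (lam : ℂ) (u : Fin n → ℂ) : toE (lam • u) = lam • toE u := rfl

private lemma toE_ne_zero {n : ℕ} {u : Fin n → ℂ} (hu : u ≠ 0) : toE u ≠ 0 := by
  simpa [toE] using hu


set_option maxHeartbeats 1000000 in
/-- Transversality, Proposition 5.1. For a proper holomorphic map
`f : D_{p,q} → D_{p',q'}` extending `C²` near a Shilov boundary point and sending the Shilov
boundary into the Shilov boundary, at a dense set of Shilov boundary points `x` in `U` the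
derivative `Df(x)(v)` has rank `q'` for a dense set of directions `v`. -/
theorem stmt2 (p q p' q' : ℕ) (hq : 1 ≤ q) (hpq : q ≤ p) (hq' : 1 ≤ q') (hp'q' : q' ≤ p')
    (D : Set (Matrix (Fin p) (Fin q) ℂ))
    (hD : D = {Z : Matrix (Fin p) (Fin q) ℂ | (1 - Zᴴ * Z).PosDef})
    (D' : Set (Matrix (Fin p') (Fin q') ℂ))
    (hD' : D' = {Z : Matrix (Fin p') (Fin q') ℂ | (1 - Zᴴ * Z).PosDef})
    (f : Matrix (Fin p) (Fin q) ℂ → Matrix (Fin p') (Fin q') ℂ)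
    (hholo : DifferentiableOn ℂ f D) (hmaps : Set.MapsTo f D D')
    (hproper : ∀ K : Set (Matrix (Fin p') (Fin q') ℂ), K ⊆ D' → IsCompact K →
      IsCompact {Z ∈ D | f Z ∈ K})
    (P : Matrix (Fin p) (Fin q) ℂ) (hP : Pᴴ * P = 1)
    (U : Set (Matrix (Fin p) (Fin q) ℂ)) (hU : IsOpen U) (hPU : P ∈ U)
    (F : Matrix (Fin p) (Fin q) ℂ → Matrix (Fin p') (Fin q') ℂ)
    (hFf : Set.EqOn F f D) (hF : ContDiffOn ℝ 2 F (closure D ∩ U))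
    (hShilov : ∀ Z ∈ U, Zᴴ * Z = 1 → (F Z)ᴴ * F Z = 1) :
    ∃ W : Set (Matrix (Fin p) (Fin q) ℂ),
      W ⊆ {Z | Zᴴ * Z = 1} ∩ U ∧
      {Z : Matrix (Fin p) (Fin q) ℂ | Zᴴ * Z = 1} ∩ U ⊆ closure W ∧
      ∀ x ∈ W, Dense {v : Matrix (Fin p) (Fin q) ℂ |
        (fderivWithin ℝ F (closure D ∩ U) x v).rank = q'} := by
  classical
  refine ⟨{Z | Zᴴ * Z = 1} ∩ U, subset_rfl, subset_closure, ?_⟩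
  rintro x ⟨hx1, hxU⟩
  simp only [Set.mem_setOf_eq] at hx1
  set S : Set (Matrix (Fin p) (Fin q) ℂ) := closure D ∩ U with hSdef
  set L : Matrix (Fin p) (Fin q) ℂ →L[ℝ] Matrix (Fin p') (Fin q') ℂ :=
    fderivWithin ℝ F S x with hLdef
  -- membership of the disc through x in D
  have hmemD : ∀ lam : ℂ, ‖lam‖ < 1 → lam • x ∈ D := by
    intro lam hlam
    rw [hD]
    apply posdef_of_norm_lt
    intro v hv
    have h1 : (lam • x) *ᵥ v = lam • (x *ᵥ v) := smul_mulVec lam x v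
    rw [h1, toE_smul, norm_smul, norm_mulVec_eq hx1]
    have hpos : 0 < ‖toE v‖ := norm_pos_iff.mpr (toE_ne_zero hv)
    nlinarith
  -- real segment in D
  have hrmemD : ∀ r : ℝ, 0 ≤ r → r < 1 → r • x ∈ D := by
    intro r h0 h1
    have : ((r : ℂ)) • x = r • x := rfl
    rw [← this]
    apply hmemD
    rw [Complex.norm_real, Real.norm_eq_abs, abs_of_nonneg h0]
    exact h1
  -- x ∈ closure D
  have hxclD : x ∈ closure D := by
    have htend : Tendsto (fun r : ℝ => r • x) (𝓝[<] (1 : ℝ)) (𝓝 x) := by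
      have hcont : Continuous (fun r : ℝ => r • x) := continuous_id.smul continuous_const
      have := hcont.tendsto 1
      rw [one_smul] at this
      exact this.mono_left nhdsWithin_le_nhds
    refine mem_closure_of_tendsto htend ?_
    filter_upwards [Ioo_mem_nhdsLT_of_mem (Set.mem_Ioc.mpr ⟨zero_lt_one, le_refl 1⟩)]
      with r hr
    exact hrmemD r hr.1.le hr.2
  have hxS : x ∈ S := ⟨hxclD, hxU⟩
  have hFd : DifferentiableOn ℝ F S := hF.differentiableOn two_ne_zero
  have hLD : HasFDerivWithinAt F L S x := (hFd x hxS).hasFDerivWithinAt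
  -- neighborhood radius for U along the segment
  obtain ⟨ε₀, hε₀, hball⟩ : ∃ ε > 0, ∀ r : ℝ, |r - 1| < ε → r • x ∈ U := by
    have hcont : Continuous (fun r : ℝ => r • x) := continuous_id.smul continuous_const
    have hnhds : (fun r : ℝ => r • x) ⁻¹' U ∈ 𝓝 (1 : ℝ) := by
      apply hcont.continuousAt.preimage_mem_nhds
      rw [one_smul]
      exact hU.mem_nhds hxU
    rw [Metric.mem_nhds_iff] at hnhds
    obtain ⟨ε, hε, hsub⟩ := hnhds
    exact ⟨ε, hε, fun r hr => hsub (by rwa [mem_ball, Real.dist_eq])⟩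
  set r₁ : ℝ := max (1 - ε₀ / 2) 0 with hr₁def
  have hr₁0 : 0 ≤ r₁ := le_max_right _ _
  have hr₁1 : r₁ < 1 := by
    rw [hr₁def, max_lt_iff]
    constructor <;> linarith
  have hIccU : ∀ r ∈ Set.Icc r₁ 1, r • x ∈ U := by
    intro r hr
    apply hball
    have h1 : 1 - ε₀ / 2 ≤ r₁ := le_max_left _ _
    have h2 := hr.1
    have h3 := hr.2
    rw [abs_lt]
    constructor <;> linarith
  have hγS : Set.MapsTo (fun r : ℝ => r • x) (Set.Icc r₁ 1) S := by
    intro r hr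
    refine ⟨?_, hIccU r hr⟩
    rcases eq_or_lt_of_le hr.2 with h | h
    · subst h; simpa using hxclD
    · exact subset_closure (hrmemD r (le_trans hr₁0 hr.1) h)
  have hγd : HasDerivWithinAt (fun r : ℝ => r • x) x (Set.Icc r₁ 1) 1 := by
    have := ((hasDerivAt_id (1 : ℝ)).smul_const x).hasDerivWithinAt
      (s := Set.Icc r₁ 1)
    simp at this; exact this
  have hcomp : HasDerivWithinAt (fun r : ℝ => F (r • x)) (L x) (Set.Icc r₁ 1) 1 := by
    have h1 : HasFDerivWithinAt F L S ((fun r : ℝ => r • x) 1) := by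
      simpa using hLD
    exact (h1.comp_hasDerivWithinAt 1 hγd hγS : _)
  -- the key nonvanishing statement
  have hb : (F x)ᴴ * F x = 1 := hShilov x hxU hx1
  have key : ∀ c : Fin q' → ℂ, c ≠ 0 → (L x) *ᵥ c ≠ 0 := by
    intro c hc hc0
    set b : Matrix (Fin p') (Fin q') ℂ := F x with hbdef
    set n : ℝ := ‖toE c‖ with hndef
    have hn : 0 < n := norm_pos_iff.mpr (toE_ne_zero hc)
    set u0 : Fin p' → ℂ := b *ᵥ c with hu0
    have hnu : ‖toE u0‖ = n := norm_mulVec_eq hb c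
    -- the continuous linear functional
    set φlin : Matrix (Fin p') (Fin q') ℂ →ₗ[ℂ] ℂ :=
      { toFun := fun W => dotProduct (star u0) (W *ᵥ c)
        map_add' := by
          intro W₁ W₂
          show dotProduct (star u0) ((W₁ + W₂) *ᵥ c) = _
          rw [Matrix.add_mulVec, dotProduct_add]
        map_smul' := by
          intro a W
          show dotProduct (star u0) ((a • W) *ᵥ c)
            = a * dotProduct (star u0) (W *ᵥ c)
          rw [Matrix.smul_mulVec, dotProduct_smul, smul_eq_mul] } with hφlin
    set φ : Matrix (Fin p') (Fin q') ℂ →L[ℂ] ℂ := LinearMap.toContinuousLinearMap φlin with hφ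
    have hφapp : ∀ W, φ W = dotProduct (star u0) (W *ᵥ c) := fun W => rfl
    -- bound on φ
    have hφbound : ∀ W : Matrix (Fin p') (Fin q') ℂ, W ∈ D' → ‖φ W‖ < n ^ 2 := by
      intro W hW
      rw [hD'] at hW
      have hlt1 : ‖toE (W *ᵥ c)‖ < ‖toE c‖ := posdef_norm_lt hW hc
      rw [hφapp, dot_eq_inner]
      calc ‖@inner ℂ _ _ (toE u0) (toE (W *ᵥ c))‖ ≤ ‖toE u0‖ * ‖toE (W *ᵥ c)‖ :=
            norm_inner_le_norm _ _
      _ < n ^ 2 := by rw [hnu]; rw [← hndef] at hlt1; nlinarith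
    -- the boundary function
    set Φ : ℂ → ℂ := fun lam => φ (f (lam • x)) / ((n : ℂ)) ^ 2 with hΦdef
    have hΦd : DifferentiableOn ℂ Φ (ball 0 1) := by
      intro z hz
      apply DifferentiableWithinAt.div_const
      have h1 : DifferentiableWithinAt ℂ (fun lam : ℂ => lam • x) (ball 0 1) z :=
        (differentiableAt_id.smul_const x).differentiableWithinAt
      have hz1 : ‖z‖ < 1 := by rwa [mem_ball_zero_iff] at hz
      have h2 : DifferentiableWithinAt ℂ (fun lam : ℂ => f (lam • x)) (ball 0 1) z := by
        apply DifferentiableWithinAt.comp (t := D)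
        · exact hholo _ (hmemD z hz1)
        · exact h1
        · intro w hw
          exact hmemD w (by rwa [mem_ball_zero_iff] at hw)
      exact φ.differentiableAt.comp_differentiableWithinAt z h2
    have hΦlt : ∀ z ∈ ball (0 : ℂ) 1, ‖Φ z‖ < 1 := by
      intro z hz
      have hz1 : ‖z‖ < 1 := by rwa [mem_ball_zero_iff] at hz
      have hW : f (z • x) ∈ D' := hmaps (hmemD z hz1)
      rw [hΦdef]
      simp only
      rw [norm_div, norm_pow, Complex.norm_real, Real.norm_eq_abs, abs_of_pos hn]
      rw [div_lt_one (by positivity)]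
      exact hφbound _ hW
    obtain ⟨c₀, hc₀, hbound⟩ := key_disc hΦd hΦlt
    -- the boundary segment function
    set Ψ : ℝ → ℂ := fun r => φ (F (r • x)) / ((n : ℂ)) ^ 2 with hΨdef
    have hφLx : φ (L x) = 0 := by rw [hφapp, hc0, dotProduct_zero]
    have hΨd : HasDerivWithinAt Ψ 0 (Set.Icc r₁ 1) 1 := by
      have h1 : HasDerivWithinAt (fun r : ℝ => φ (F (r • x))) ((φ.restrictScalars ℝ) (L x))
          (Set.Icc r₁ 1) 1 :=
        ((φ.restrictScalars ℝ).hasFDerivAt).comp_hasDerivWithinAt 1 hcomp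
      have h2 := h1.div_const ((n : ℂ) ^ 2)
      have h3 : (φ.restrictScalars ℝ) (L x) / ((n : ℂ)) ^ 2 = 0 := by
        rw [ContinuousLinearMap.coe_restrictScalars', hφLx, zero_div]
      rwa [h3] at h2
    have hΨ1 : Ψ 1 = 1 := by
      rw [hΨdef]
      simp only [one_smul]
      rw [hφapp, ← hbdef, ← hu0, dot_self_eq, hnu]
      push_cast
      field_simp
    -- the filter
    set l : Filter ℝ := 𝓝[Set.Icc r₁ 1 \ {1}] (1 : ℝ) with hldef
    have hIco : Set.Icc r₁ 1 \ {1} = Set.Ico r₁ 1 := Set.Icc_sdiff_right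
    have hlne : l.NeBot := by
      rw [hldef, hIco]
      apply mem_closure_iff_nhdsWithin_neBot.mp
      rw [closure_Ico hr₁1.ne]
      exact Set.right_mem_Icc.mpr hr₁1.le
    have hslope : Tendsto (slope Ψ 1) l (𝓝 0) :=
      hasDerivWithinAt_iff_tendsto_slope.mp hΨd
    have hReT : Tendsto (fun r => (slope Ψ 1 r).re) l (𝓝 0) := by
      have := (Complex.continuous_re.tendsto 0).comp hslope
      exact this
    -- eventual facts
    have ev1 : ∀ᶠ r in l, r ∈ Set.Ico r₁ 1 := by
      rw [hldef, hIco]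
      exact self_mem_nhdsWithin
    have hTΨ : Tendsto Ψ l (𝓝 1) := by
      have h1 : Tendsto Ψ (𝓝[Set.Icc r₁ 1] (1 : ℝ)) (𝓝 (Ψ 1)) := hΨd.continuousWithinAt
      rw [hΨ1] at h1
      exact h1.mono_left (nhdsWithin_mono 1 Set.diff_subset)
    have ev2 : ∀ᶠ r in l, 1 ≤ ‖1 + Ψ r‖ := by
      have h2 : Tendsto (fun r => ‖1 + Ψ r‖) l (𝓝 ‖(1 : ℂ) + 1‖) :=
        (continuous_norm.tendsto _).comp (tendsto_const_nhds.add hTΨ)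
      have h3 : ‖(1 : ℂ) + 1‖ = 2 := by norm_num
      rw [h3] at h2
      exact h2.eventually (eventually_ge_nhds (by norm_num))
    have ev3 : ∀ᶠ r in l, Ψ r = Φ r := by
      filter_upwards [ev1] with r hr
      have hrD : r • x ∈ D := hrmemD r (le_trans hr₁0 hr.1) hr.2
      rw [hΨdef, hΦdef]
      simp only
      rw [show ((r : ℂ)) • x = r • x from rfl, hFf hrD]
    have evslope : ∀ᶠ r in l, c₀ ≤ (slope Ψ 1 r).re := by
      filter_upwards [ev1, ev2, ev3] with r hr hnorm hΨΦ
      have hr0 : 0 ≤ r := le_trans hr₁0 hr.1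
      have hr1 : r < 1 := hr.2
      have h1r : 0 < 1 - r := by linarith
      have hb1 := hbound r hr0 hr1 (by rwa [← hΨΦ])
      rw [← hΨΦ] at hb1
      have hne1 : r - 1 ≠ 0 := by intro h; rw [sub_eq_zero] at h; exact hr1.ne h
      have hsl : (slope Ψ 1 r).re = (1 - (Ψ r).re) / (1 - r) := by
        rw [slope_def_module, hΨ1, Complex.smul_re, Complex.sub_re, Complex.one_re,
          eq_div_iff h1r.ne']
        linear_combination (1 - (Ψ r).re) * inv_mul_cancel₀ hne1
      rw [hsl]
      rw [le_div_iff₀ h1r]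
      linarith [hb1]
    have : c₀ ≤ 0 := ge_of_tendsto hReT evslope
    linarith
  -- positive definiteness of (L x)ᴴ (L x)
  have hPD : ((L x)ᴴ * (L x)).PosDef := by
    refine Matrix.PosDef.of_dotProduct_mulVec_pos (Matrix.posSemidef_conjTranspose_mul_self (L x)).1 fun v hv => ?_
    rw [← helper_WW]
    exact dot_self_pos (key v hv)
  have hdet : ((L x)ᴴ * (L x)).det ≠ 0 := hPD.det_pos.ne'
  exact dense_rank L x hdet
end

section
/- Let Δ ⊆ ℂ be the open unit disc, n ≥ 2 an integer, and h : Δ → 𝔹ⁿ a proper holomorphic map that is C² up to a connected nonempty open subset U of ∂Δ. Then the set {P ∈ U : Σ_{j=1}^n h_j'(P) · conj(h_j(P)) = 0} is nowhere dense in ∂Δ, where h_j' denotes the complex derivative of the j-th component (extended continuously to U by the C² extension). -/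
open Complex Metric ComplexConjugate

noncomputable def Complex.abs : AbsoluteValue ℂ ℝ :=
  IsAbsoluteValue.toAbsoluteValue (norm : ℂ → ℝ)

lemma Complex.norm_eq_abs (z : ℂ) : ‖z‖ = Complex.abs z := rfl

lemma Complex.abs_ofReal (r : ℝ) : Complex.abs (r : ℂ) = |r| := Complex.norm_real r

lemma Complex.abs_conj (z : ℂ) : Complex.abs (conj z) = Complex.abs z := Complex.norm_conj z

lemma Complex.sq_abs (z : ℂ) : Complex.abs z ^ 2 = Complex.normSq z := Complex.sq_norm z

lemma Complex.abs_le_abs_of_mapsTo_ball_self {f : ℂ → ℂ} {R : ℝ} {z : ℂ}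
    (hd : DifferentiableOn ℂ f (Metric.ball 0 R))
    (h_maps : Set.MapsTo f (Metric.ball 0 R) (Metric.ball 0 R)) (h₀ : f 0 = 0)
    (hz : Complex.abs z < R) : Complex.abs (f z) ≤ Complex.abs z :=
  Complex.norm_le_norm_of_mapsTo_ball hd (h_maps.mono_right Metric.ball_subset_closedBall) h₀ hz

open Complex Metric ComplexConjugate

set_option maxHeartbeats 1000000 in
lemma keyid (c w : ℂ) : Complex.normSq (1 - conj c * w) - Complex.normSq (w - c)
    = (1 - Complex.normSq c) * (1 - Complex.normSq w) := by
  simp only [Complex.normSq_apply, Complex.sub_re, Complex.sub_im, Complex.mul_re, Complex.mul_im,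
    Complex.one_re, Complex.one_im, Complex.conj_re, Complex.conj_im]
  ring

set_option maxHeartbeats 1000000 in
lemma keyA (f f' : ℂ → ℂ) (P : ℂ) (hP : Complex.abs P = 1)
    (hf : ∀ z ∈ Metric.ball (0:ℂ) 1, HasDerivAt f (f' z) z)
    (hmaps : ∀ z ∈ Metric.ball (0:ℂ) 1, Complex.abs (f z) < 1)
    (hlim : ∀ η > (0:ℝ), ∀ t < (1:ℝ), ∃ u : ℝ, t < u ∧ u < 1 ∧ 0 ≤ u ∧
      Complex.abs (1 - f ((u:ℂ) * P)) < η)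
    (hder : ∀ ε > (0:ℝ), ∃ δ > (0:ℝ), ∀ s : ℝ, 1 - δ < s → s < 1 → 0 ≤ s →
      Complex.abs (f' ((s:ℂ) * P)) ≤ ε) : False := by
  have h0 : (0:ℂ) ∈ Metric.ball (0:ℂ) 1 := by simp
  set c := f 0 with hc
  have hcabs : Complex.abs c < 1 := hmaps 0 h0
  have hcnn : 0 ≤ Complex.abs c := Complex.abs.nonneg c
  set κ : ℝ := (1 - Complex.abs c) / (1 + Complex.abs c) with hκ
  have hκpos : 0 < κ := div_pos (by linarith) (by linarith)
  obtain ⟨δ, hδpos, hδ⟩ := hder (κ/4) (by positivity)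
  set t : ℝ := max (1 - δ/2) (1/2) with ht
  have ht0 : (0:ℝ) ≤ t := le_trans (by norm_num) (le_max_right _ _)
  have ht1 : t < 1 := by apply max_lt <;> linarith
  have htδ : 1 - δ < t := lt_of_lt_of_le (by linarith) (le_max_left _ _)
  have hmem : ∀ s : ℝ, 0 ≤ s → s < 1 → ((s:ℂ) * P) ∈ Metric.ball (0:ℂ) 1 := by
    intro s hs0 hs1
    rw [mem_ball_zero_iff, Complex.norm_eq_abs, map_mul, Complex.abs_ofReal, hP, mul_one,
      _root_.abs_of_nonneg hs0]
    exact hs1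
  -- the Möbius transform g
  set g : ℂ → ℂ := fun z => (f z - c) / (1 - conj c * f z) with hg
  have hden : ∀ z ∈ Metric.ball (0:ℂ) 1,
      1 - Complex.abs c * Complex.abs (f z) ≤ Complex.abs (1 - conj c * f z)
      ∧ (1 - conj c * f z) ≠ 0 := by
    intro z hz
    have h1 : Complex.abs (conj c * f z) < 1 := by
      rw [map_mul, Complex.abs_conj]
      nlinarith [hmaps z hz, Complex.abs.nonneg (f z)]
    constructor
    · have h2 := Complex.abs.le_sub 1 (conj c * f z)
      rw [map_one, map_mul, Complex.abs_conj] at h2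
      linarith
    · intro h
      rw [sub_eq_zero] at h
      rw [← h] at h1
      simp at h1
  have hgdiff : DifferentiableOn ℂ g (Metric.ball (0:ℂ) 1) := by
    apply DifferentiableOn.div
    · intro z hz
      exact ((hf z hz).differentiableAt.sub_const c).differentiableWithinAt
    · intro z hz
      exact ((differentiableAt_const _).sub ((hf z hz).differentiableAt.const_mul _)).differentiableWithinAt
    · intro z hz; exact (hden z hz).2
  have hg0 : g 0 = 0 := by simp [hg, hc]
  have hgmaps : Set.MapsTo g (Metric.ball (0:ℂ) 1) (Metric.ball (0:ℂ) 1) := by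
    intro z hz
    rw [mem_ball_zero_iff, Complex.norm_eq_abs, hg]
    simp only
    rw [map_div₀, div_lt_one (Complex.abs.pos (hden z hz).2)]
    have hid := keyid c (f z)
    rw [← Complex.sq_abs, ← Complex.sq_abs, ← Complex.sq_abs, ← Complex.sq_abs] at hid
    have hp1 : (0:ℝ) < 1 - Complex.abs c ^ 2 := by nlinarith
    have hp2 : (0:ℝ) < 1 - Complex.abs (f z) ^ 2 := by
      nlinarith [hmaps z hz, Complex.abs.nonneg (f z)]
    nlinarith [Complex.abs.nonneg (f z - c), Complex.abs.nonneg (1 - conj c * f z),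
      mul_pos hp1 hp2]
  -- Schwarz at tP
  have htP : ((t:ℂ) * P) ∈ Metric.ball (0:ℂ) 1 := hmem t ht0 ht1
  have habstP : Complex.abs ((t:ℂ) * P) = t := by
    rw [map_mul, Complex.abs_ofReal, hP, mul_one, _root_.abs_of_nonneg ht0]
  have hsch : Complex.abs (g ((t:ℂ) * P)) ≤ t := by
    have := Complex.abs_le_abs_of_mapsTo_ball_self hgdiff hgmaps hg0
      (z := (t:ℂ) * P) (by rw [habstP]; exact ht1)
    rwa [habstP] at this
  set w := f ((t:ℂ) * P) with hw
  have habsw : Complex.abs w < 1 := hmaps _ htP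
  have hwnn : 0 ≤ Complex.abs w := Complex.abs.nonneg w
  have hidw := keyid c w
  rw [← Complex.sq_abs, ← Complex.sq_abs, ← Complex.sq_abs, ← Complex.sq_abs] at hidw
  have hdenw := (hden _ htP).1
  have hdneq := (hden _ htP).2
  have hwc : Complex.abs (w - c) = Complex.abs (g ((t:ℂ) * P)) * Complex.abs (1 - conj c * w) := by
    rw [hg]
    simp only
    rw [map_div₀, div_mul_cancel₀]
    exact Complex.abs.ne_zero hdneq
  have hlower : κ / 2 * (1 - t) ≤ 1 - Complex.abs w := by
    set A := Complex.abs c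
    set B := Complex.abs w
    set D := Complex.abs (1 - conj c * w)
    set G := Complex.abs (g ((t:ℂ) * P))
    have hGnn : 0 ≤ G := Complex.abs.nonneg _
    have hDpos : 0 < D := Complex.abs.pos hdneq
    have hD : 1 - A * B ≤ D := hdenw
    rw [hwc] at hidw
    have h2 : 0 < 1 - A * B := by nlinarith
    have h3 : (0:ℝ) ≤ 1 - t^2 := by nlinarith
    have h1 : 1 - t ^ 2 ≤ 1 - G ^ 2 := by nlinarith
    have hD2 : (1 - A*B)^2 ≤ D^2 := by nlinarith
    have step1 : (1 - A*B)^2 * (1 - t^2) ≤ D^2 * (1 - G^2) :=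
      mul_le_mul hD2 h1 h3 (sq_nonneg D)
    have step2 : (1 - A)^2 * (1 - t^2) ≤ (1 - A*B)^2 * (1 - t^2) := by
      have h5 : 1 - A ≤ 1 - A*B := by nlinarith
      have h4 : (0:ℝ) < 1 - A := by linarith
      have hsq : (1-A)^2 ≤ (1-A*B)^2 := by nlinarith
      exact mul_le_mul_of_nonneg_right hsq h3
    have h5 : D^2 * (1 - G^2) = (1 - A^2) * (1 - B^2) := by nlinarith
    have h6 : (1 - A)^2 * (1 - t^2) ≤ (1 - A^2) * (1 - B^2) := by linarith
    have key : κ * (1 - t^2) ≤ 1 - B^2 := by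
      rw [hκ, div_mul_eq_mul_div, div_le_iff₀ (by linarith : (0:ℝ) < 1 + A)]
      nlinarith [h6, mul_pos (by linarith : (0:ℝ) < 1 - A) (by linarith : (0:ℝ) < 1 + A)]
    nlinarith
  -- Upper bound
  obtain ⟨u, htu, hu1, hu0, hηu⟩ := hlim (κ/8 * (1 - t)) (mul_pos (by positivity) (by linarith)) t ht1
  set F : ℝ → ℂ := fun s => f ((s:ℂ) * P) with hF
  have hFd : ∀ s ∈ Set.Icc t u, HasDerivWithinAt F (f' ((s:ℂ) * P) * P) (Set.Icc t u) s := by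
    intro s hs
    have hsball : ((s:ℂ) * P) ∈ Metric.ball (0:ℂ) 1 :=
      hmem s (le_trans ht0 hs.1) (lt_of_le_of_lt hs.2 hu1)
    have h2 : HasDerivAt (fun z : ℂ => f (z * P)) (f' ((s:ℂ) * P) * P) (s:ℂ) :=
      HasDerivAt.comp (s:ℂ) (hf _ hsball) (hasDerivAt_mul_const P)
    exact h2.comp_ofReal.hasDerivWithinAt
  have hbound : ∀ s ∈ Set.Icc t u, ‖f' ((s:ℂ) * P) * P‖ ≤ κ/4 := by
    intro s hs
    have h3 : Complex.abs (f' ((s:ℂ) * P)) ≤ κ/4 :=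
      hδ s (by linarith [hs.1]) (lt_of_le_of_lt hs.2 hu1) (le_trans ht0 hs.1)
    rw [Complex.norm_eq_abs, map_mul, hP, mul_one]
    exact h3
  have hmvt := Convex.norm_image_sub_le_of_norm_hasDerivWithin_le hFd hbound
    (convex_Icc t u) (Set.left_mem_Icc.2 htu.le) (Set.right_mem_Icc.2 htu.le)
  have hFut : Complex.abs (f ((u:ℂ)*P) - w) ≤ κ/4 * (1 - t) := by
    have he1 : ‖F u - F t‖ = Complex.abs (f ((u:ℂ)*P) - w) := by rw [hF, Complex.norm_eq_abs]
    have he2 : ‖(u:ℝ) - t‖ = u - t := by rw [Real.norm_eq_abs, _root_.abs_of_nonneg (by linarith)]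
    rw [he1, he2] at hmvt
    nlinarith
  have hup : Complex.abs (1 - w) ≤ κ/8 * (1 - t) + κ/4 * (1 - t) := by
    have := Complex.abs.add_le (1 - f ((u:ℂ)*P)) (f ((u:ℂ)*P) - w)
    have he : (1 - f ((u:ℂ)*P)) + (f ((u:ℂ)*P) - w) = 1 - w := by ring
    rw [he] at this
    linarith
  have h2 : 1 - Complex.abs w ≤ Complex.abs (1 - w) := by
    have := Complex.abs.le_sub 1 w
    rw [map_one] at this
    linarith
  nlinarith


set_option maxHeartbeats 1000000 in

/-- Lemma 5.2. For a proper holomorphic map `h : Δ → 𝔹ⁿ` (`n ≥ 2`) that is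
`C²` up to a connected nonempty open subset `U` of `∂Δ`, the set of points `P ∈ U` where the
image of the outward normal is complex-tangential to the sphere, i.e.
`∑ⱼ hⱼ'(P)·conj(hⱼ(P)) = 0`, is nowhere dense in `∂Δ`. -/
theorem stmt3 (n : ℕ) (hn : 2 ≤ n)
    (h : ℂ → EuclideanSpace ℂ (Fin n))
    (hholo : DifferentiableOn ℂ h (Metric.ball (0 : ℂ) 1))
    (hmaps : Set.MapsTo h (Metric.ball (0 : ℂ) 1) (Metric.ball (0 : EuclideanSpace ℂ (Fin n)) 1))
    (hproper : ∀ K : Set (EuclideanSpace ℂ (Fin n)),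
      K ⊆ Metric.ball (0 : EuclideanSpace ℂ (Fin n)) 1 → IsCompact K →
      IsCompact {z ∈ Metric.ball (0 : ℂ) 1 | h z ∈ K})
    -- `U` is a connected nonempty open subset of the circle `∂Δ`
    (V : Set ℂ) (hV : IsOpen V)
    (U : Set ℂ) (hUdef : U = V ∩ Metric.sphere (0 : ℂ) 1) (hUconn : IsConnected U)
    -- `h` is `C²` up to `U`: a `C²` extension `H` on `closure(Δ) ∩ W`, `W` open containing `U`
    (W : Set ℂ) (hW : IsOpen W) (hUW : U ⊆ W)
    (H : ℂ → EuclideanSpace ℂ (Fin n))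
    (hHh : Set.EqOn H h (Metric.ball (0 : ℂ) 1 ∩ W))
    (hH : ContDiffOn ℝ 2 H (closure (Metric.ball (0 : ℂ) 1) ∩ W))
    -- `h'` is the complex derivative of `h`, extended continuously by the `C²` extension
    (h' : ℂ → EuclideanSpace ℂ (Fin n))
    (hh' : ∀ z ∈ Metric.ball (0 : ℂ) 1, HasDerivAt h (h' z) z)
    (hh'cont : ContinuousOn h' (closure (Metric.ball (0 : ℂ) 1) ∩ W)) :
    IsNowhereDense ((fun P : Metric.sphere (0 : ℂ) 1 => (P : ℂ)) ⁻¹'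
      {P : ℂ | P ∈ U ∧ ∑ j : Fin n, h' P j * (starRingEnd ℂ) (H P j) = 0}) := by
  have hPempty : {P : ℂ | P ∈ U ∧ ∑ j : Fin n, h' P j * (starRingEnd ℂ) (H P j) = 0} = ∅ := by
    rw [Set.eq_empty_iff_forall_notMem]
    rintro P ⟨hPU, hsum⟩
    have hPs : P ∈ Metric.sphere (0:ℂ) 1 := by rw [hUdef] at hPU; exact hPU.2
    have habsP : Complex.abs P = 1 := by
      have := mem_sphere_zero_iff_norm.1 hPs
      rwa [Complex.norm_eq_abs] at this
    have hPW : P ∈ W := hUW hPU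
    obtain ⟨ρ, hρpos, hρ⟩ := Metric.isOpen_iff.1 hW P hPW
    have hPcl : P ∈ closure (Metric.ball (0:ℂ) 1) := by
      rw [closure_ball (0:ℂ) one_ne_zero]
      simp only [mem_closedBall, Complex.dist_eq, sub_zero]
      exact le_of_eq habsP
    have hPS : P ∈ closure (Metric.ball (0:ℂ) 1) ∩ W := ⟨hPcl, hPW⟩
    have hdistP : ∀ s : ℝ, dist ((s:ℂ) * P) P = |s - 1| := by
      intro s
      rw [Complex.dist_eq]
      have he : (s:ℂ) * P - P = ((s:ℂ) - 1) * P := by ring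
      rw [he, Complex.norm_eq_abs, map_mul, habsP, mul_one, ← Complex.ofReal_one, ← Complex.ofReal_sub,
        Complex.abs_ofReal]
    have hmemball : ∀ s : ℝ, 0 ≤ s → s < 1 → ((s:ℂ) * P) ∈ Metric.ball (0:ℂ) 1 := by
      intro s h0 h1
      rw [mem_ball_zero_iff, Complex.norm_eq_abs, map_mul, Complex.abs_ofReal, habsP, mul_one,
        _root_.abs_of_nonneg h0]
      exact h1
    have hmemS : ∀ s : ℝ, 0 ≤ s → s < 1 → 1 - s < ρ →
        ((s:ℂ) * P) ∈ closure (Metric.ball (0:ℂ) 1) ∩ W ∧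
        ((s:ℂ) * P) ∈ Metric.ball (0:ℂ) 1 ∩ W := by
      intro s h0 h1 h2
      have hWm : ((s:ℂ) * P) ∈ W := by
        apply hρ
        rw [mem_ball, hdistP, abs_sub_comm, _root_.abs_of_nonneg (by linarith)]
        exact h2
      exact ⟨⟨subset_closure (hmemball s h0 h1), hWm⟩, ⟨hmemball s h0 h1, hWm⟩⟩
    have hHcont : ContinuousWithinAt H (closure (Metric.ball (0:ℂ) 1) ∩ W) P :=
      hH.continuousOn P hPS
    rw [Metric.continuousWithinAt_iff] at hHcont
    -- approach points
    have happ : ∀ ε > (0:ℝ), ∃ s : ℝ, 0 ≤ s ∧ s < 1 ∧ 1 - s < ε ∧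
        ((s:ℂ) * P) ∈ Metric.ball (0:ℂ) 1 ∩ W ∧ dist (H ((s:ℂ)*P)) (H P) < ε := by
      intro ε hε
      obtain ⟨δ, hδpos, hδ⟩ := hHcont ε hε
      set m : ℝ := min (min δ ρ) (min ε 1) with hm
      have hmpos : 0 < m := by
        apply lt_min (lt_min hδpos hρpos) (lt_min hε one_pos)
      have hm1 : m ≤ 1 := le_trans (min_le_right _ _) (min_le_right _ _)
      set s : ℝ := 1 - m / 2 with hs
      have hs0 : 0 ≤ s := by rw [hs]; linarith
      have hs1 : s < 1 := by rw [hs]; linarith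
      have h1s : 1 - s = m / 2 := by rw [hs]; ring
      have hsρ : 1 - s < ρ := by
        rw [h1s]
        have : m ≤ ρ := le_trans (min_le_left (min δ ρ) (min ε 1)) (min_le_right δ ρ)
        linarith
      have hsε : 1 - s < ε := by
        rw [h1s]
        have : m ≤ ε := le_trans (min_le_right (min δ ρ) (min ε 1)) (min_le_left ε 1)
        linarith
      have hsδ : 1 - s < δ := by
        rw [h1s]
        have : m ≤ δ := le_trans (min_le_left (min δ ρ) (min ε 1)) (min_le_left δ ρ)
        linarith
      obtain ⟨hS, hBW⟩ := hmemS s hs0 hs1 hsρ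
      refine ⟨s, hs0, hs1, hsε, hBW, ?_⟩
      apply hδ hS
      rw [hdistP, abs_sub_comm, _root_.abs_of_nonneg (by linarith)]
      exact hsδ
    -- norm of H P is 1
    have hnormle : ‖H P‖ ≤ 1 := by
      by_contra hgt
      push_neg at hgt
      obtain ⟨s, hs0, hs1, hsε, hBW, hdH⟩ := happ (‖H P‖ - 1) (by linarith)
      have h1 : ‖H ((s:ℂ)*P)‖ = ‖h ((s:ℂ)*P)‖ := by rw [hHh hBW]
      have h2 : ‖h ((s:ℂ)*P)‖ < 1 := mem_ball_zero_iff.1 (hmaps hBW.1)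
      have h3 : ‖H P‖ - ‖H ((s:ℂ)*P)‖ ≤ ‖H P - H ((s:ℂ)*P)‖ := norm_sub_norm_le _ _
      rw [dist_eq_norm, norm_sub_rev] at hdH
      linarith
    have hnormge : 1 ≤ ‖H P‖ := by
      by_contra hlt
      push_neg at hlt
      set ε : ℝ := (1 - ‖H P‖) / 2 with hε
      have hεpos : 0 < ε := by rw [hε]; linarith
      set r : ℝ := ‖H P‖ + ε with hr
      have hr1 : r < 1 := by rw [hr, hε]; linarith
      have hScomp : IsCompact {z ∈ Metric.ball (0:ℂ) 1 | h z ∈ Metric.closedBall 0 r} :=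
        hproper _ (closedBall_subset_ball hr1) (isCompact_closedBall _ _)
      have hSclosed : IsClosed {z ∈ Metric.ball (0:ℂ) 1 | h z ∈ Metric.closedBall 0 r} :=
        hScomp.isClosed
      have hPmem : P ∈ {z ∈ Metric.ball (0:ℂ) 1 | h z ∈ Metric.closedBall 0 r} := by
        rw [← hSclosed.closure_eq]
        rw [Metric.mem_closure_iff]
        intro ε' hε'
        obtain ⟨s, hs0, hs1, hsε, hBW, hdH⟩ := happ (min ε ε') (lt_min hεpos hε')
        refine ⟨(s:ℂ) * P, ⟨hBW.1, ?_⟩, ?_⟩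
        · rw [mem_closedBall_zero_iff, ← hHh hBW]
          have h3 : ‖H ((s:ℂ)*P)‖ - ‖H P‖ ≤ ‖H ((s:ℂ)*P) - H P‖ := norm_sub_norm_le _ _
          rw [dist_eq_norm] at hdH
          have := lt_of_lt_of_le hdH (min_le_left _ _)
          rw [hr]; linarith
        · rw [dist_comm, hdistP, abs_sub_comm, _root_.abs_of_nonneg (by linarith)]
          exact lt_of_lt_of_le hsε (min_le_right _ _)
      have : ‖P‖ < 1 := mem_ball_zero_iff.1 hPmem.1
      rw [Complex.norm_eq_abs, habsP] at this
      linarith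
    have hanorm : ‖H P‖ = 1 := le_antisymm hnormle hnormge
    -- the scalar function f
    set a : EuclideanSpace ℂ (Fin n) := H P with ha
    have hinnself : (inner ℂ a a : ℂ) = 1 := by
      rw [inner_self_eq_norm_sq_to_K, hanorm]; norm_num
    have hsum0 : (inner ℂ a (h' P) : ℂ) = 0 := by
      rw [PiLp.inner_apply]
      simp only [RCLike.inner_apply]
      rw [← hsum]
    set f : ℂ → ℂ := fun z => (inner ℂ a (h z) : ℂ) with hf
    set f' : ℂ → ℂ := fun z => (inner ℂ a (h' z) : ℂ) with hf'
    have hfd : ∀ z ∈ Metric.ball (0:ℂ) 1, HasDerivAt f (f' z) z := by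
      intro z hz
      have := (innerSL ℂ a).hasFDerivAt.comp_hasDerivAt (x := z) (hh' z hz)
      exact this
    have hfm : ∀ z ∈ Metric.ball (0:ℂ) 1, Complex.abs (f z) < 1 := by
      intro z hz
      have h1 : ‖(inner ℂ a (h z) : ℂ)‖ ≤ ‖a‖ * ‖h z‖ := norm_inner_le_norm a (h z)
      have h2 : ‖h z‖ < 1 := mem_ball_zero_iff.1 (hmaps hz)
      rw [Complex.norm_eq_abs] at h1
      rw [hf]
      simp only
      calc Complex.abs (inner ℂ a (h z) : ℂ) ≤ ‖a‖ * ‖h z‖ := h1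
        _ = ‖h z‖ := by rw [hanorm, one_mul]
        _ < 1 := h2
    have hlim : ∀ η > (0:ℝ), ∀ t < (1:ℝ), ∃ u : ℝ, t < u ∧ u < 1 ∧ 0 ≤ u ∧
        Complex.abs (1 - f ((u:ℂ) * P)) < η := by
      intro η hη t ht
      obtain ⟨u, hu0, hu1, huε, hBW, hdH⟩ := happ (min η ((1-t)/2)) (lt_min hη (by linarith))
      refine ⟨u, ?_, hu1, hu0, ?_⟩
      · have := lt_of_lt_of_le huε (min_le_right _ _); linarith
      · have he : (1 : ℂ) - f ((u:ℂ)*P) = (inner ℂ a (a - H ((u:ℂ)*P)) : ℂ) := by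
          rw [inner_sub_right, hinnself, hf]
          simp only
          rw [hHh hBW]
        rw [he]
        have h1 : ‖(inner ℂ a (a - H ((u:ℂ)*P)) : ℂ)‖ ≤ ‖a‖ * ‖a - H ((u:ℂ)*P)‖ :=
          norm_inner_le_norm _ _
        rw [Complex.norm_eq_abs] at h1
        rw [dist_eq_norm, norm_sub_rev] at hdH
        calc Complex.abs (inner ℂ a (a - H ((u:ℂ)*P)) : ℂ) ≤ ‖a‖ * ‖a - H ((u:ℂ)*P)‖ := h1
          _ = ‖H P - H ((u:ℂ)*P)‖ := by rw [hanorm, one_mul, ha]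
          _ < min η ((1-t)/2) := hdH
          _ ≤ η := min_le_left _ _
    have hder : ∀ ε > (0:ℝ), ∃ δ > (0:ℝ), ∀ s : ℝ, 1 - δ < s → s < 1 → 0 ≤ s →
        Complex.abs (f' ((s:ℂ) * P)) ≤ ε := by
      intro ε hε
      have h'cont : ContinuousWithinAt h' (closure (Metric.ball (0:ℂ) 1) ∩ W) P :=
        hh'cont P hPS
      rw [Metric.continuousWithinAt_iff] at h'cont
      obtain ⟨δ₀, hδ₀pos, hδ₀⟩ := h'cont ε hε
      refine ⟨min δ₀ ρ, lt_min hδ₀pos hρpos, ?_⟩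
      intro s hs1 hs2 hs3
      have hsρ : 1 - s < ρ := lt_of_lt_of_le (by linarith [min_le_right δ₀ ρ]) (le_refl _)
      obtain ⟨hS, _⟩ := hmemS s hs3 hs2 hsρ
      have hd : dist ((s:ℂ)*P) P < δ₀ := by
        rw [hdistP, abs_sub_comm, _root_.abs_of_nonneg (by linarith)]
        linarith [min_le_left δ₀ ρ]
      have h1 := hδ₀ hS hd
      have he : f' ((s:ℂ)*P) = (inner ℂ a (h' ((s:ℂ)*P) - h' P) : ℂ) := by
        rw [inner_sub_right, hsum0, sub_zero]
      rw [he]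
      have h2 : ‖(inner ℂ a (h' ((s:ℂ)*P) - h' P) : ℂ)‖ ≤ ‖a‖ * ‖h' ((s:ℂ)*P) - h' P‖ :=
        norm_inner_le_norm _ _
      rw [Complex.norm_eq_abs] at h2
      rw [dist_eq_norm] at h1
      calc Complex.abs (inner ℂ a (h' ((s:ℂ)*P) - h' P) : ℂ) ≤ ‖a‖ * ‖h' ((s:ℂ)*P) - h' P‖ := h2
        _ = ‖h' ((s:ℂ)*P) - h' P‖ := by rw [hanorm, one_mul]
        _ ≤ ε := le_of_lt h1
    exact keyA f f' P habsP hfd hfm hlim hder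
  rw [hPempty, Set.preimage_empty]
  exact isNowhereDense_empty
end

section
/- Let ℍ = {ζ ∈ ℂ : Re ζ < 0}, let U ⊆ ℝ be a nonempty open set, and let h : ℍ → ℂⁿ be holomorphic with ‖h(ζ)‖ ≤ 1 for all ζ ∈ ℍ. Suppose h extends to a map that is twice continuously differentiable in the real sense on closure(ℍ) ∩ W, where W ⊆ ℂ is open with {it : t ∈ U} ⊆ W, and suppose that for every t ∈ U one has ‖h(it)‖ = 1 and Σ_{j=1}^n h_j'(it) · conj(h_j(it)) = 0, where h_j' is the complex derivative of the j-th component. Then h is constant. -/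
open Complex Metric Set

/-- Möbius quotient estimate: if `w` and `a` are in the open right half-plane, then
`(w - a)/(w + conj a)` lies in the open unit disc. -/
lemma aux_abs_lt (w a : ℂ) (hw : 0 < w.re) (ha : 0 < a.re) :
    ‖(w - a) / (w + (starRingEnd ℂ) a)‖ < 1 := by
  have hne : w + (starRingEnd ℂ) a ≠ 0 := by
    intro hzero
    have : (w + (starRingEnd ℂ) a).re = 0 := by rw [hzero]; simp
    simp only [Complex.add_re, Complex.conj_re] at this
    linarith
  rw [norm_div, div_lt_one (norm_pos_iff.mpr hne)]
  have h2 : ‖w - a‖ ^ 2 < ‖w + (starRingEnd ℂ) a‖ ^ 2 := by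
    rw [Complex.sq_norm, Complex.sq_norm]
    simp only [Complex.normSq_apply, Complex.sub_re, Complex.sub_im, Complex.add_re,
      Complex.add_im, Complex.conj_re, Complex.conj_im]
    nlinarith
  exact lt_of_pow_lt_pow_left₀ 2 (norm_nonneg _) h2

/-- Key scalar lemma: a holomorphic function bounded by 1 on the left half-plane whose
distance to the value 1 is `o(s)` along the horizontal segment approaching `i t₀`
must be identically 1. -/
lemma key_scalar (φ : ℂ → ℂ) (t₀ : ℝ)
    (hφd : DifferentiableOn ℂ φ {ζ : ℂ | ζ.re < 0})
    (hφb : ∀ ζ : ℂ, ζ.re < 0 → ‖φ ζ‖ ≤ 1)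
    (hsmall : ∀ δ : ℝ, 0 < δ → ∃ s : ℝ, 0 < s ∧ s < 1 ∧
      ‖1 - φ (-(s : ℂ) + (t₀ : ℂ) * Complex.I)‖ ≤ δ * s) :
    ∀ ζ : ℂ, ζ.re < 0 → φ ζ = 1 := by
  set z₀ : ℂ := -1 + (t₀ : ℂ) * Complex.I with hz₀def
  have hz₀ : z₀.re < 0 := by simp [hz₀def]
  have hReG : ∀ ζ : ℂ, ζ.re < 0 → 0 ≤ (1 - φ ζ).re := by
    intro ζ hζ
    have h1 : (φ ζ).re ≤ ‖φ ζ‖ := Complex.re_le_norm _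
    have h2 : ‖φ ζ‖ ≤ 1 := hφb ζ hζ
    simp only [Complex.sub_re, Complex.one_re]
    linarith
  -- Step 1: `φ z₀ = 1`.
  have hnorm0 : ∀ δ : ℝ, 0 < δ → ‖1 - φ z₀‖ ≤ δ := by
    intro δ hδ
    obtain ⟨s, hs0, hs1, hsb⟩ := hsmall δ hδ
    have hkey : ∀ ε : ℝ, 0 < ε → s * ‖1 - φ z₀‖ ≤ δ * s + (1 + s) * ε := by
      intro ε hε
      set a : ℂ := 1 - φ z₀ + (ε : ℂ) with hadef
      have haRe : 0 < a.re := by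
        have := hReG z₀ hz₀
        simp only [hadef, Complex.add_re, Complex.ofReal_re]
        linarith
      set η : ℂ → ℂ := fun z => (t₀ : ℂ) * Complex.I + (z + 1) / (z - 1) with hηdef
      have hzne : ∀ z ∈ ball (0 : ℂ) 1, z - 1 ≠ 0 := by
        intro z hz hzero
        rw [sub_eq_zero] at hzero
        rw [mem_ball, dist_zero_right, hzero] at hz
        simp at hz
      have hη : ∀ z ∈ ball (0 : ℂ) 1, (η z).re < 0 := by
        intro z hz
        have hz1 : Complex.normSq z < 1 := by
          rw [mem_ball, dist_zero_right] at hz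
          have : ‖z‖ ^ 2 < 1 := by nlinarith [norm_nonneg z]
          rwa [Complex.sq_norm] at this
        have hz2 : 0 < Complex.normSq (z - 1) := by
          rw [Complex.normSq_pos]; exact hzne z hz
        have : ((z + 1) / (z - 1)).re < 0 := by
          rw [Complex.div_re]
          have hnum : (z + 1).re * (z - 1).re + (z + 1).im * (z - 1).im
              = Complex.normSq z - 1 := by
            simp only [Complex.add_re, Complex.add_im, Complex.sub_re, Complex.sub_im,
              Complex.one_re, Complex.one_im, Complex.normSq_apply]
            ring
          rw [← add_div, hnum]
          exact div_neg_of_neg_of_pos (by linarith) hz2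
        simp only [hηdef, Complex.add_re, Complex.mul_re, Complex.I_re, Complex.I_im,
          Complex.ofReal_re, Complex.ofReal_im]
        simpa using this
      set F : ℂ → ℂ := fun z =>
        (1 - φ (η z) + (ε : ℂ) - a) / (1 - φ (η z) + (ε : ℂ) + (starRingEnd ℂ) a) with hFdef
      have hwRe : ∀ z ∈ ball (0 : ℂ) 1, 0 < (1 - φ (η z) + (ε : ℂ)).re := by
        intro z hz
        have := hReG (η z) (hη z hz)
        simp only [Complex.add_re, Complex.ofReal_re]
        linarith
      have hdenne : ∀ z ∈ ball (0 : ℂ) 1,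
          1 - φ (η z) + (ε : ℂ) + (starRingEnd ℂ) a ≠ 0 := by
        intro z hz hzero
        have h1 := hwRe z hz
        have : (1 - φ (η z) + (ε : ℂ) + (starRingEnd ℂ) a).re = 0 := by rw [hzero]; simp
        simp only [Complex.add_re, Complex.conj_re] at this h1
        linarith
      have hηd : DifferentiableOn ℂ η (ball (0 : ℂ) 1) := by
        apply DifferentiableOn.const_add
        exact DifferentiableOn.div
          ((differentiable_id.add_const 1).differentiableOn)
          ((differentiable_id.sub_const 1).differentiableOn)
          (hzne)
      have hφη : DifferentiableOn ℂ (fun z => φ (η z)) (ball (0 : ℂ) 1) :=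
        hφd.comp hηd (fun z hz => hη z hz)
      have hFd : DifferentiableOn ℂ F (ball (0 : ℂ) 1) := by
        apply DifferentiableOn.div
        · exact (((differentiableOn_const 1).sub hφη).add
            (differentiableOn_const _)).sub (differentiableOn_const _)
        · exact (((differentiableOn_const 1).sub hφη).add (differentiableOn_const _)).add
            (differentiableOn_const _)
        · exact hdenne
      have hFmaps : MapsTo F (ball (0 : ℂ) 1) (ball (0 : ℂ) 1) := by
        intro z hz
        rw [mem_ball, dist_zero_right]
        exact aux_abs_lt _ a (hwRe z hz) haRe
      have hF0 : F 0 = 0 := by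
        have hη0 : η 0 = z₀ := by
          simp only [hηdef, hz₀def]
          norm_num
          ring
        simp only [hFdef, hη0, hadef]
        rw [sub_self, zero_div]
      set zs : ℂ := ((s : ℂ) - 1) / ((s : ℂ) + 1) with hzsdef
      have hs1c : ((s : ℂ) + 1) ≠ 0 := by
        intro hzero
        have : ((s : ℂ) + 1).re = 0 := by rw [hzero]; simp
        simp only [Complex.add_re, Complex.ofReal_re, Complex.one_re] at this
        linarith
      have hzn : ‖zs‖ = (1 - s) / (1 + s) := by
        have e1 : (s : ℂ) - 1 = ((s - 1 : ℝ) : ℂ) := by push_cast; ring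
        have e2 : (s : ℂ) + 1 = ((s + 1 : ℝ) : ℂ) := by push_cast; ring
        rw [hzsdef, norm_div, e1, e2, Complex.norm_real, Complex.norm_real,
          Real.norm_eq_abs, Real.norm_eq_abs, abs_of_nonpos (by linarith),
          abs_of_pos (by linarith)]
        ring_nf
      have hzsball : zs ∈ ball (0 : ℂ) 1 := by
        rw [mem_ball, dist_zero_right, hzn, div_lt_one (by linarith)]
        linarith
      have hηzs : η zs = -(s : ℂ) + (t₀ : ℂ) * Complex.I := by
        have hzs1 : zs - 1 ≠ 0 := hzne zs hzsball
        have key : zs + 1 = (-(s : ℂ)) * (zs - 1) := by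
          rw [hzsdef]
          field_simp
          ring
        have hq : (zs + 1) / (zs - 1) = -(s : ℂ) := (div_eq_iff hzs1).mpr key
        simp only [hηdef, hq]
        ring
      have hS := Complex.dist_le_dist_of_mapsTo_ball hFd (by rw [hF0]; exact hFmaps.mono_right ball_subset_closedBall) hzsball
      rw [hF0, dist_zero_right, dist_zero_right, hzn] at hS
      set b : ℂ := 1 - φ (-(s : ℂ) + (t₀ : ℂ) * Complex.I) + (ε : ℂ) with hbdef
      have hbRe : 0 < b.re := by
        have hre : (-(s : ℂ) + (t₀ : ℂ) * Complex.I).re < 0 := by simp [hs0]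
        have := hReG _ hre
        simp only [hbdef, Complex.add_re, Complex.ofReal_re]
        linarith
      have hFzs : F zs = (b - a) / (b + (starRingEnd ℂ) a) := by
        simp only [hFdef, hηzs, hbdef]
      have hdenpos : 0 < ‖b + (starRingEnd ℂ) a‖ := by
        rw [norm_pos_iff]
        intro hzero
        have : (b + (starRingEnd ℂ) a).re = 0 := by rw [hzero]; simp
        simp only [Complex.add_re, Complex.conj_re] at this
        linarith
      rw [hFzs, norm_div, div_le_div_iff₀ hdenpos (by linarith : (0:ℝ) < 1 + s)] at hS
      have hba : ‖a‖ - ‖b‖ ≤ ‖b - a‖ := by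
        have h1 := norm_sub_norm_le a b
        have h2 : ‖a - b‖ = ‖b - a‖ := norm_sub_rev a b
        linarith
      have hab2 : ‖b + (starRingEnd ℂ) a‖ ≤ ‖b‖ + ‖a‖ := by
        refine (norm_add_le _ _).trans ?_
        rw [RCLike.norm_conj]
      have hmul := mul_le_mul_of_nonneg_right hba (by linarith : (0:ℝ) ≤ 1 + s)
      have h4 : s * ‖a‖ ≤ ‖b‖ := by nlinarith [norm_nonneg (b - a), norm_nonneg b, norm_nonneg a]
      have hεn : ‖(ε : ℂ)‖ = ε := by
        rw [Complex.norm_real, Real.norm_eq_abs, abs_of_pos hε]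
      have hbb : ‖b‖ ≤ δ * s + ε := by
        refine (norm_add_le _ _).trans ?_
        rw [hεn]
        linarith [hsb]
      have haa : ‖1 - φ z₀‖ - ε ≤ ‖a‖ := by
        have h5 : ‖1 - φ z₀‖ ≤ ‖a‖ + ‖(ε : ℂ)‖ := by
          have : (1 - φ z₀) = a - (ε : ℂ) := by rw [hadef]; ring
          rw [this]
          exact norm_sub_le _ _
        rw [hεn] at h5
        linarith
      nlinarith [norm_nonneg (1 - φ z₀)]
    -- pass to the limit ε → 0
    have h2 : s * ‖1 - φ z₀‖ ≤ δ * s := by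
      by_contra hcon
      push_neg at hcon
      have hεp : 0 < (s * ‖1 - φ z₀‖ - δ * s) / (2 * (1 + s)) := by
        apply div_pos (by linarith) (by linarith)
      have hk := hkey _ hεp
      have hval : (1 + s) * ((s * ‖1 - φ z₀‖ - δ * s) / (2 * (1 + s)))
          = (s * ‖1 - φ z₀‖ - δ * s) / 2 := by
        field_simp
      rw [hval] at hk
      linarith
    have h3 : s * ‖1 - φ z₀‖ ≤ s * δ := by linarith [h2, mul_comm δ s]
    exact le_of_mul_le_mul_left (by linarith [h3]) hs0
  have hG0 : φ z₀ = 1 := by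
    have h0 : ‖1 - φ z₀‖ ≤ 0 := by
      by_contra hcon
      push_neg at hcon
      have := hnorm0 (‖1 - φ z₀‖ / 2) (by linarith)
      linarith
    have h1 : 1 - φ z₀ = 0 := by rwa [← norm_le_zero_iff]
    have := sub_eq_zero.mp h1
    exact this.symm
  -- Step 2: maximum modulus principle
  have hmax : IsMaxOn (norm ∘ φ) {ζ : ℂ | ζ.re < 0} z₀ := by
    intro ζ hζ
    simp only [Function.comp_apply, hG0, norm_one]
    exact hφb ζ hζ
  have heq := Complex.eqOn_of_isPreconnected_of_isMaxOn_norm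
    ((convex_halfSpace_re_lt 0).isPreconnected)
    (isOpen_lt Complex.continuous_re continuous_const)
    hφd hz₀ hmax
  intro ζ hζ
  have := heq hζ
  simpa [Function.const, hG0] using this
/-- A bounded holomorphic map `h : ℍ → ℂⁿ` on the left half-plane, `C²` up to
a boundary piece `{it : t ∈ U}`, whose boundary values lie on the unit sphere and whose complex
derivative is complex-tangential there (`∑ⱼ hⱼ'(it)·conj(hⱼ(it)) = 0` for all `t ∈ U`),
must be constant. -/
theorem stmt4 (n : ℕ)
    (h : ℂ → EuclideanSpace ℂ (Fin n))
    (hholo : DifferentiableOn ℂ h {ζ : ℂ | ζ.re < 0})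
    (hbdd : ∀ ζ : ℂ, ζ.re < 0 → ‖h ζ‖ ≤ 1)
    (U : Set ℝ) (hUo : IsOpen U) (hUne : U.Nonempty)
    (W : Set ℂ) (hWo : IsOpen W) (hUW : ∀ t ∈ U, (t : ℂ) * Complex.I ∈ W)
    -- the `C²` extension `H` of `h` on `closure(ℍ) ∩ W`
    (H : ℂ → EuclideanSpace ℂ (Fin n))
    (hHh : ∀ ζ : ℂ, ζ.re < 0 → H ζ = h ζ)
    (hH : ContDiffOn ℝ 2 H (closure {ζ : ℂ | ζ.re < 0} ∩ W))
    -- `h'` is the complex derivative of `h`, extended continuously to the boundary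
    (h' : ℂ → EuclideanSpace ℂ (Fin n))
    (hh' : ∀ ζ : ℂ, ζ.re < 0 → HasDerivAt h (h' ζ) ζ)
    (hh'cont : ContinuousOn h' (closure {ζ : ℂ | ζ.re < 0} ∩ W))
    (hnorm : ∀ t ∈ U, ‖H ((t : ℂ) * Complex.I)‖ = 1)
    (htang : ∀ t ∈ U, ∑ j : Fin n,
      h' ((t : ℂ) * Complex.I) j * (starRingEnd ℂ) (H ((t : ℂ) * Complex.I) j) = 0) :
    ∀ ζ ξ : ℂ, ζ.re < 0 → ξ.re < 0 → h ζ = h ξ := by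
  obtain ⟨t₀, ht₀⟩ := hUne
  set c : EuclideanSpace ℂ (Fin n) := H ((t₀ : ℂ) * Complex.I) with hcdef
  have hc1 : ‖c‖ = 1 := hnorm t₀ ht₀
  set φ : ℂ → ℂ := fun ζ => (inner ℂ c (H ζ) : ℂ) with hφdef
  have hφh : ∀ ζ : ℂ, ζ.re < 0 → φ ζ = (inner ℂ c (h ζ) : ℂ) := by
    intro ζ hζ
    simp only [hφdef, hHh ζ hζ]
  have hφd : DifferentiableOn ℂ φ {ζ : ℂ | ζ.re < 0} := by
    have h1 : DifferentiableOn ℂ (fun ζ => ((innerSL ℂ c) (h ζ) : ℂ)) {ζ : ℂ | ζ.re < 0} :=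
      (innerSL ℂ c).differentiable.comp_differentiableOn hholo
    exact h1.congr (fun ζ hζ => by simp [hφh ζ hζ])
  have hφb : ∀ ζ : ℂ, ζ.re < 0 → ‖φ ζ‖ ≤ 1 := by
    intro ζ hζ
    rw [hφh ζ hζ]
    calc ‖(inner ℂ c (h ζ) : ℂ)‖ ≤ ‖c‖ * ‖h ζ‖ := norm_inner_le_norm c (h ζ)
    _ ≤ 1 := by rw [hc1, one_mul]; exact hbdd ζ hζ
  have htan0 : (inner ℂ c (h' ((t₀ : ℂ) * Complex.I)) : ℂ) = 0 := by
    rw [PiLp.inner_apply]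
    rw [← htang t₀ ht₀]
    exact Finset.sum_congr rfl fun j _ => by simp only [hcdef, RCLike.inner_apply]
  -- the o(s) boundary estimate
  have hsmall : ∀ δ : ℝ, 0 < δ → ∃ s : ℝ, 0 < s ∧ s < 1 ∧
      ‖1 - φ (-(s : ℂ) + (t₀ : ℂ) * Complex.I)‖ ≤ δ * s := by
    intro δ hδ
    obtain ⟨r, hr, hball⟩ := Metric.isOpen_iff.mp hWo _ (hUW t₀ ht₀)
    set p : ℝ → ℂ := fun σ => -(σ : ℂ) + (t₀ : ℂ) * Complex.I with hpdef
    have hpcont : Continuous p := by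
      apply Continuous.add
      · exact (Complex.continuous_ofReal.comp continuous_id).neg
      · exact continuous_const
    have hpS : ∀ σ ∈ Icc (0 : ℝ) (r / 2), p σ ∈ closure {ζ : ℂ | ζ.re < 0} ∩ W := by
      intro σ hσ
      constructor
      · rw [Complex.closure_setOf_re_lt]
        simp only [mem_setOf_eq, hpdef, Complex.add_re, Complex.neg_re, Complex.ofReal_re,
          Complex.mul_re, Complex.I_re, Complex.I_im, Complex.ofReal_im]
        simp
        linarith [hσ.1]
      · apply hball
        rw [mem_ball, Complex.dist_eq]
        have he : p σ - (t₀ : ℂ) * Complex.I = -(σ : ℂ) := by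
          simp only [hpdef]; ring
        rw [he, norm_neg, Complex.norm_real, Real.norm_eq_abs, _root_.abs_of_nonneg hσ.1]
        linarith [hσ.2]
    have hr2 : (0 : ℝ) < r / 2 := by linarith
    have hh'p : ContinuousOn (fun σ : ℝ => h' (p σ)) (Icc (0 : ℝ) (r / 2)) :=
      hh'cont.comp hpcont.continuousOn hpS
    have hvcont : ContinuousOn (fun σ : ℝ => ‖(innerSL ℂ c) (h' (p σ))‖) (Icc (0 : ℝ) (r / 2)) :=
      (continuous_norm.comp (innerSL ℂ c).continuous).comp_continuousOn hh'p
    have hv0 : ‖(innerSL ℂ c) (h' (p 0))‖ = 0 := by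
      have hp0 : p 0 = (t₀ : ℂ) * Complex.I := by simp [hpdef]
      rw [hp0]
      simp only [innerSL_apply_apply]
      rw [htan0, norm_zero]
    have hcw : Filter.Tendsto (fun σ : ℝ => ‖(innerSL ℂ c) (h' (p σ))‖)
        (nhdsWithin 0 (Icc (0 : ℝ) (r / 2))) (nhds 0) := by
      have := hvcont 0 (left_mem_Icc.mpr (le_of_lt hr2))
      rw [ContinuousWithinAt] at this
      simpa only [hv0] using this
    obtain ⟨d, hd, hdprop⟩ := Metric.tendsto_nhdsWithin_nhds.mp hcw δ hδ
    set s : ℝ := min (min (d / 2) (r / 2)) (1 / 2) with hsdef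
    have hs0 : 0 < s := lt_min (lt_min (by linarith) hr2) (by norm_num)
    have hs1 : s < 1 := lt_of_le_of_lt (min_le_right _ _) (by norm_num)
    have hsr : s ≤ r / 2 := le_trans (min_le_left _ _) (min_le_right _ _)
    have hsd : s < d := lt_of_le_of_lt (le_trans (min_le_left _ _) (min_le_left _ _)) (by linarith)
    have hbound : ∀ σ ∈ Icc (0 : ℝ) s, ‖(innerSL ℂ c) (h' (p σ))‖ ≤ δ := by
      intro σ hσ
      have hσ2 : σ ∈ Icc (0 : ℝ) (r / 2) := ⟨hσ.1, le_trans hσ.2 hsr⟩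
      have hdist : dist σ 0 < d := by
        rw [Real.dist_eq, sub_zero, _root_.abs_of_nonneg hσ.1]; linarith [hσ.2]
      have := hdprop hσ2 hdist
      rw [Real.dist_0_eq_abs, _root_.abs_of_nonneg (norm_nonneg _)] at this
      linarith
    refine ⟨s, hs0, hs1, ?_⟩
    set f : ℝ → ℂ := fun σ => φ (p σ) with hfdef
    have hpSs : ∀ σ ∈ Icc (0 : ℝ) s, p σ ∈ closure {ζ : ℂ | ζ.re < 0} ∩ W :=
      fun σ hσ => hpS σ ⟨hσ.1, le_trans hσ.2 hsr⟩
    have hfc : ContinuousOn f (Icc (0 : ℝ) s) := by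
      have h1 : ContinuousOn (fun σ : ℝ => H (p σ)) (Icc (0 : ℝ) s) :=
        hH.continuousOn.comp hpcont.continuousOn hpSs
      exact (innerSL ℂ c).continuous.comp_continuousOn h1
    have hderiv : ∀ σ ∈ Ioo (0 : ℝ) s,
        HasDerivAt f (-(inner ℂ c (h' (p σ)) : ℂ)) σ := by
      intro σ hσ
      have hre : (p σ).re < 0 := by
        simp only [hpdef, Complex.add_re, Complex.neg_re, Complex.ofReal_re]
        simp
        linarith [hσ.1]
      have hd1 : HasDerivAt p (-1 : ℂ) σ := by
        have h0 : HasDerivAt (fun σ : ℝ => ((σ : ℝ) : ℂ)) 1 σ := by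
          simpa using (hasDerivAt_id σ).ofReal_comp
        simpa [hpdef] using (h0.neg).add_const ((t₀ : ℂ) * Complex.I)
      have hd2 : HasDerivAt h (h' (p σ)) (p σ) := hh' _ hre
      have hd3 : HasDerivAt (h ∘ p) ((-1 : ℂ) • h' (p σ)) σ := HasDerivAt.scomp σ hd2 hd1
      have hd4 := (((innerSL ℂ c).hasFDerivAt (x := (h ∘ p) σ)).restrictScalars ℝ).comp_hasDerivAt σ hd3
      have hd5 : HasDerivAt (fun σ' : ℝ => (inner ℂ c (h (p σ')) : ℂ))
          (-(inner ℂ c (h' (p σ)) : ℂ)) σ := by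
        simp at hd4; exact hd4
      have hev : f =ᶠ[nhds σ] fun σ' : ℝ => (inner ℂ c (h (p σ')) : ℂ) := by
        have hop : ∀ᶠ σ' in nhds σ, σ' ∈ Ioi (0 : ℝ) := isOpen_Ioi.eventually_mem hσ.1
        filter_upwards [hop] with σ' hσ'
        have hre' : (p σ').re < 0 := by
          simp only [hpdef, Complex.add_re, Complex.neg_re, Complex.ofReal_re]
          simp
          exact hσ'
        simp [hfdef, hφdef, hHh _ hre']
      exact hd5.congr_of_eventuallyEq hev
    have hint : IntervalIntegrable (fun σ : ℝ => -(inner ℂ c (h' (p σ)) : ℂ))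
        MeasureTheory.volume 0 s := by
      apply ContinuousOn.intervalIntegrable
      rw [uIcc_of_le (le_of_lt hs0)]
      have h1 : ContinuousOn (fun σ : ℝ => h' (p σ)) (Icc (0 : ℝ) s) :=
        hh'cont.comp hpcont.continuousOn hpSs
      exact ((innerSL ℂ c).continuous.comp_continuousOn h1).neg
    have hFTC := intervalIntegral.integral_eq_sub_of_hasDeriv_right_of_le (le_of_lt hs0) hfc
      (fun σ hσ => (hderiv σ hσ).hasDerivWithinAt) hint
    have hf0 : f 0 = 1 := by
      have hp0 : p 0 = (t₀ : ℂ) * Complex.I := by simp [hpdef]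
      simp only [hfdef, hφdef, hp0, ← hcdef]
      rw [inner_self_eq_norm_sq_to_K, hc1]
      norm_num
    have hfs : f s = φ (-(s : ℂ) + (t₀ : ℂ) * Complex.I) := rfl
    have hval : 1 - φ (-(s : ℂ) + (t₀ : ℂ) * Complex.I)
        = -(∫ σ in (0:ℝ)..s, -(inner ℂ c (h' (p σ)) : ℂ)) := by
      rw [hFTC, hfs, hf0]; ring
    rw [hval, norm_neg]
    have hbnd : ‖∫ σ in (0:ℝ)..s, -(inner ℂ c (h' (p σ)) : ℂ)‖ ≤ δ * |s - 0| := by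
      apply intervalIntegral.norm_integral_le_of_norm_le_const
      intro σ hσ
      rw [Set.uIoc_of_le (le_of_lt hs0)] at hσ
      rw [norm_neg]
      exact hbound σ ⟨le_of_lt hσ.1, hσ.2⟩
    rwa [sub_zero, _root_.abs_of_pos hs0] at hbnd
  -- apply the key scalar lemma
  have hφ1 := key_scalar φ t₀ hφd hφb hsmall
  have hconst : ∀ ζ : ℂ, ζ.re < 0 → h ζ = c := by
    intro ζ hζ
    have h1 : (inner ℂ c (h ζ) : ℂ) = 1 := by rw [← hφh ζ hζ]; exact hφ1 ζ hζ
    have h3 : (inner ℂ (h ζ) c : ℂ) = 1 := by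
      rw [← inner_conj_symm, h1, map_one]
    have h2 : ‖h ζ - c‖ ^ 2 ≤ 0 := by
      rw [@norm_sub_sq ℂ, h3]
      have hb := hbdd ζ hζ
      simp only [RCLike.one_re]
      rw [hc1]
      nlinarith [norm_nonneg (h ζ)]
    have h4 : ‖h ζ - c‖ = 0 := by nlinarith [norm_nonneg (h ζ - c)]
    exact sub_eq_zero.mp (norm_eq_zero.mp h4)
  intro ζ ξ hζ hξ
  rw [hconst ζ hζ, hconst ξ hξ]
end

section
/- Let p' ≥ q' ≥ 1 be integers and let Δ ⊆ ℂ be the open unit disc. Let F : Δ → M_{p'×q'}(ℂ) be holomorphic and suppose F extends to a continuously differentiable (C¹ in the real sense) map on closure(Δ) ∩ W for some open set W ⊆ ℂ containing 1. Assume F(ζ)* F(ζ) = I_{q'} for every ζ ∈ ∂Δ ∩ W, and F(1) = the p'×q' matrix whose top q'×q' block is I_{q'} and whose remaining entries are 0. Write F = (f₁; f₂) where f₁ is the top q'×q' block. Then the matrix f₁'(1) is Hermitian, i.e. f₁'(1) = (f₁'(1))*, where f₁' denotes the complex derivative (extended continuously to the boundary point 1). -/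
open Matrix
open scoped Topology

attribute [local instance] Matrix.normedAddCommGroup Matrix.normedSpace

open Metric Filter Set Topology in
lemma stmt6_aux_closure (r : ℝ) :
    closedBall (0:ℂ) 1 ∩ ball 1 r ⊆ closure (ball (0:ℂ) 1 ∩ ball 1 r) := by
  rintro z ⟨hz1, hz2⟩
  rw [mem_closedBall, dist_zero_right] at hz1
  rw [mem_ball] at hz2
  have htend : Tendsto (fun t : ℝ => (t:ℂ) * z) (𝓝[<] (1:ℝ)) (𝓝 z) := by
    have : Tendsto (fun t : ℝ => (t:ℂ) * z) (𝓝 (1:ℝ)) (𝓝 z) := by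
      have := ((Complex.continuous_ofReal.mul (continuous_const (y := z))).tendsto (1:ℝ))
      simpa only [Pi.mul_def, Complex.ofReal_one, one_mul] using this
    exact this.mono_left nhdsWithin_le_nhds
  refine mem_closure_of_tendsto htend ?_
  have ha : max 0 (1 - (r - dist z 1)) < 1 := by
    rcases max_cases 0 (1 - (r - dist z 1)) with ⟨h, _⟩ | ⟨h, _⟩ <;> rw [h] <;> linarith
  filter_upwards [Ioo_mem_nhdsLT_of_mem (Set.mem_Ioc.2 ⟨ha, le_refl 1⟩)] with t ht
  obtain ⟨ht1, ht2⟩ := ht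
  have ht0 : 0 < t := lt_of_le_of_lt (le_max_left _ _) ht1
  have htr : 1 - (r - dist z 1) < t := lt_of_le_of_lt (le_max_right _ _) ht1
  constructor
  · rw [mem_ball, dist_zero_right, norm_mul, Complex.norm_real, Real.norm_eq_abs,
      abs_of_pos ht0]
    calc t * ‖z‖ ≤ t * 1 := by nlinarith
    _ < 1 := by linarith
  · rw [mem_ball]
    have h3 : dist ((t:ℂ)*z) 1 ≤ dist ((t:ℂ)*z) z + dist z 1 := dist_triangle _ _ _
    have h4 : dist ((t:ℂ)*z) z = (1-t) * ‖z‖ := by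
      rw [dist_eq_norm]
      have : (t:ℂ)*z - z = -(((1:ℂ)-t)*z) := by ring
      rw [this, norm_neg, norm_mul]
      congr 1
      rw [show ((1:ℂ) - t) = ((1 - t : ℝ) : ℂ) by push_cast; ring, Complex.norm_real,
        Real.norm_eq_abs, abs_of_nonneg (by linarith)]
    nlinarith [dist_nonneg (x := (t:ℂ)*z) (y := z), norm_nonneg z]

/-- Let `F : Δ → M_{p'×q'}(ℂ)` be holomorphic, `C¹` up to the boundary near
`1 ∈ ∂Δ`, with `F(ζ)*F(ζ) = I` on `∂Δ ∩ W` and `F(1) = (I;0)`. Then the top `q'×q'` block of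
the boundary derivative `F'(1)` is Hermitian. -/
theorem stmt6 (p' q' : ℕ) (hq' : 1 ≤ q') (hp'q' : q' ≤ p')
    (F : ℂ → Matrix (Fin p') (Fin q') ℂ)
    (hholo : DifferentiableOn ℂ F (Metric.ball (0 : ℂ) 1))
    (W : Set ℂ) (hWo : IsOpen W) (h1W : (1 : ℂ) ∈ W)
    (hreg : ContDiffOn ℝ 1 F (closure (Metric.ball (0 : ℂ) 1) ∩ W))
    (hunit : ∀ ζ ∈ Metric.sphere (0 : ℂ) 1 ∩ W, (F ζ)ᴴ * F ζ = 1)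
    (hF1 : ∀ (k : Fin p') (j : Fin q'), F 1 k j = if (k : ℕ) = (j : ℕ) then 1 else 0)
    -- `F'` is the complex derivative of `F`, extended continuously to the boundary
    (F' : ℂ → Matrix (Fin p') (Fin q') ℂ)
    (hF' : ∀ z ∈ Metric.ball (0 : ℂ) 1, HasDerivAt F (F' z) z)
    (hF'cont : ContinuousOn F' (closure (Metric.ball (0 : ℂ) 1) ∩ W)) :
    ∀ i j : Fin q', F' 1 (Fin.castLE hp'q' i) j
      = (starRingEnd ℂ) (F' 1 (Fin.castLE hp'q' j) i) := by
  intro i j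
  obtain ⟨r, hr0, hrW⟩ : ∃ r > 0, Metric.ball (1:ℂ) r ⊆ W := Metric.isOpen_iff.mp hWo 1 h1W
  have hr2 : 0 < r/2 := by linarith
  set S := closure (Metric.ball (0:ℂ) 1) ∩ W with hSdef
  have hclball : closure (Metric.ball (0:ℂ) 1) = Metric.closedBall 0 1 :=
    closure_ball 0 one_ne_zero
  set C := Metric.ball (0:ℂ) 1 ∩ Metric.ball 1 (r/2) with hCdef
  have h1S : (1:ℂ) ∈ S := ⟨by rw [hclball]; simp, h1W⟩
  have hCS : C ⊆ S := by
    rintro z ⟨hz1, hz2⟩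
    exact ⟨subset_closure hz1, hrW (Metric.ball_subset_ball (by linarith) hz2)⟩
  have hclCS : closure C ⊆ S := by
    have h1 : closure C ⊆ Metric.closedBall (0:ℂ) 1 ∩ Metric.closedBall 1 (r/2) := by
      apply closure_minimal
      · exact Set.inter_subset_inter Metric.ball_subset_closedBall Metric.ball_subset_closedBall
      · exact Metric.isClosed_closedBall.inter Metric.isClosed_closedBall
    rintro z hz
    obtain ⟨hz1, hz2⟩ := h1 hz
    exact ⟨hclball ▸ hz1, hrW (lt_of_le_of_lt (Metric.mem_closedBall.mp hz2) (by linarith))⟩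
  have hclC : Metric.closedBall (0:ℂ) 1 ∩ Metric.ball 1 (r/2) ⊆ closure C :=
    stmt6_aux_closure (r/2)
  have h1clC : (1:ℂ) ∈ closure C := hclC ⟨by simp, Metric.mem_ball_self hr2⟩
  have hFcont : ContinuousOn F S := hreg.continuousOn
  -- entrywise complex derivatives inside the disc
  have hdkj : ∀ (k : Fin p') (jj : Fin q'), ∀ z ∈ Metric.ball (0:ℂ) 1,
      HasDerivAt (fun z => F z k jj) (F' z k jj) z := fun k jj z hz =>
    hasDerivAt_pi.mp (hasDerivAt_pi.mp (hF' z hz) k) jj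
  -- extended (real) derivative at the boundary point 1
  have hbd : ∀ (k : Fin p') (jj : Fin q'), HasFDerivWithinAt (fun z => F z k jj)
      (((1 : ℂ →L[ℂ] ℂ).smulRight (F' 1 k jj)).restrictScalars ℝ) (closure C) 1 := by
    intro k jj
    apply hasFDerivWithinAt_closure_of_tendsto_fderiv
    · exact fun z hz =>
        ((hdkj k jj z hz.1).differentiableAt.restrictScalars ℝ).differentiableWithinAt
    · exact (convex_ball _ _).inter (convex_ball _ _)
    · exact Metric.isOpen_ball.inter Metric.isOpen_ball
    · intro y hy
      exact (((continuous_apply jj).comp_continuousOn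
        ((continuous_apply k).comp_continuousOn hFcont)) y (hclCS hy)).mono hCS
    · have heq : ∀ z ∈ C, fderiv ℝ (fun z => F z k jj) z
          = ((1 : ℂ →L[ℂ] ℂ).smulRight (F' z k jj)).restrictScalars ℝ := fun z hz =>
        ((hdkj k jj z hz.1).hasFDerivAt.restrictScalars ℝ).fderiv
      have hcont' : Filter.Tendsto (fun z => F' z k jj) (𝓝[C] 1) (𝓝 (F' 1 k jj)) := by
        have h := ((continuous_apply jj).comp_continuousOn
          ((continuous_apply k).comp_continuousOn hF'cont)) 1 h1S
        exact h.mono hCS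
      have hmapc : Continuous fun a : ℂ => ((1 : ℂ →L[ℂ] ℂ).smulRight a).restrictScalars ℝ :=
        (ContinuousLinearMap.restrictScalarsIsometry ℂ ℂ ℂ ℝ ℝ).continuous.comp
          (ContinuousLinearMap.smulRightL ℂ ℂ ℂ 1).continuous
      refine Filter.Tendsto.congr' ?_ ((hmapc.tendsto _).comp hcont')
      filter_upwards [self_mem_nhdsWithin] with z hz
      exact (heq z hz).symm
  -- the boundary curve
  set γ : ℝ → ℂ := fun θ => Complex.exp (θ * Complex.I) with hγdef
  have hγ0 : γ 0 = 1 := by simp [hγdef]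
  have hγd : HasDerivAt γ Complex.I 0 := by
    have h1 : HasDerivAt (fun z : ℂ => Complex.exp (z * Complex.I)) Complex.I 0 := by
      have h2 := (hasDerivAt_id (0:ℂ)).mul_const Complex.I
      have := (Complex.hasDerivAt_exp ((0:ℂ) * Complex.I)).comp 0 h2
      simpa [Function.comp_def] using this
    simpa using h1.comp_ofReal
  have hsph : ∀ θ : ℝ, γ θ ∈ Metric.sphere (0:ℂ) 1 := by
    intro θ
    simp [hγdef, Metric.mem_sphere, Complex.dist_eq, Complex.norm_exp]
  have hnear : ∀ᶠ θ in 𝓝 (0:ℝ), γ θ ∈ Metric.ball (1:ℂ) (r/2) := by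
    refine hγd.continuousAt.eventually_mem ?_
    rw [hγ0]
    exact Metric.ball_mem_nhds _ hr2
  have ht : {θ : ℝ | γ θ ∈ closure C} ∈ 𝓝 (0:ℝ) := by
    filter_upwards [hnear] with θ hθ
    exact hclC ⟨Metric.sphere_subset_closedBall (hsph θ), hθ⟩
  -- composite derivatives along the curve
  have hcompD : ∀ (k : Fin p') (jj : Fin q'),
      HasDerivAt (fun θ => F (γ θ) k jj) (Complex.I * F' 1 k jj) 0 := by
    intro k jj
    have h2 := (hbd k jj).comp_hasDerivWithinAt_of_eq 0
      (hγd.hasDerivWithinAt (s := {θ | γ θ ∈ closure C})) (fun θ hθ => hθ) hγ0.symm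
    have h3 := h2.hasDerivAt ht
    simpa [Function.comp_def, smul_eq_mul] using h3
  -- the scalar function from the unitarity identity
  set g : ℝ → ℂ := fun θ => ∑ k : Fin p', (starRingEnd ℂ) (F (γ θ) k i) * F (γ θ) k j with hgdef
  have hgconst : g =ᶠ[𝓝 (0:ℝ)] fun _ => (1 : Matrix (Fin q') (Fin q') ℂ) i j := by
    filter_upwards [hnear] with θ hθ
    have hu := hunit (γ θ) ⟨hsph θ, hrW (Metric.ball_subset_ball (by linarith) hθ)⟩
    have h2 : ((F (γ θ))ᴴ * F (γ θ)) i j = (1 : Matrix (Fin q') (Fin q') ℂ) i j := by rw [hu]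
    simpa [hgdef, Matrix.mul_apply, Matrix.conjTranspose_apply] using h2
  have hg0 : HasDerivAt g 0 0 := (hasDerivAt_const _ _).congr_of_eventuallyEq hgconst
  have hgD : HasDerivAt g (∑ k : Fin p', ((starRingEnd ℂ) (Complex.I * F' 1 k i) * F 1 k j
      + (starRingEnd ℂ) (F 1 k i) * (Complex.I * F' 1 k j))) 0 := by
    apply HasDerivAt.fun_sum
    intro k _
    have hui := hcompD k i
    have huj := hcompD k j
    have hconj : HasDerivAt (fun θ => (starRingEnd ℂ) (F (γ θ) k i))
        ((starRingEnd ℂ) (Complex.I * F' 1 k i)) 0 := by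
      have := (Complex.conjCLE.toContinuousLinearMap.hasFDerivAt
        (x := F (γ 0) k i)).comp_hasDerivAt 0 hui
      simpa [Function.comp_def] using this
    have := hconj.mul huj
    simpa [hγ0, Pi.mul_def] using this
  have hzero := hgD.unique hg0
  have hsum : (∑ k : Fin p', ((starRingEnd ℂ) (Complex.I * F' 1 k i) * F 1 k j
      + (starRingEnd ℂ) (F 1 k i) * (Complex.I * F' 1 k j)))
      = (starRingEnd ℂ) (Complex.I * F' 1 (Fin.castLE hp'q' j) i)
        + Complex.I * F' 1 (Fin.castLE hp'q' i) j := by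
    rw [Finset.sum_add_distrib]
    congr 1
    · rw [Finset.sum_eq_single (Fin.castLE hp'q' j)]
      · rw [hF1]; simp
      · intro k _ hk
        rw [hF1]
        have hne : ¬ ((k:ℕ) = (j:ℕ)) := by
          intro h
          exact hk (Fin.ext (by simpa using h))
        simp [hne]
      · intro h; exact absurd (Finset.mem_univ _) h
    · rw [Finset.sum_eq_single (Fin.castLE hp'q' i)]
      · rw [hF1]; simp
      · intro k _ hk
        rw [hF1]
        have hne : ¬ ((k:ℕ) = (i:ℕ)) := by
          intro h
          exact hk (Fin.ext (by simpa using h))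
        simp [hne]
      · intro h; exact absurd (Finset.mem_univ _) h
  rw [hsum] at hzero
  have hkey : Complex.I * F' 1 (Fin.castLE hp'q' i) j
      = Complex.I * (starRingEnd ℂ) (F' 1 (Fin.castLE hp'q' j) i) := by
    rw [RingHom.map_mul (starRingEnd ℂ) Complex.I _, Complex.conj_I] at hzero
    linear_combination hzero
  exact mul_left_cancel₀ Complex.I_ne_zero hkey
end

section
/- Let p ≥ q ≥ 1. The set of extreme points of the compact convex set closure(D_{p,q}) = {Z ∈ M_{p×q}(ℂ) : I_q − Z*Z is positive semidefinite} equals the Shilov boundary S_{p,q,0} = {Z ∈ M_{p×q}(ℂ) : Z*Z = I_q}. -/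
open Matrix
open scoped ComplexOrder

attribute [local instance] Matrix.normedAddCommGroup Matrix.normedSpace

section Helpers

variable {m n : Type*} [Fintype m] [Fintype n] [DecidableEq n]

lemma psd_csmul {M : Matrix n n ℂ} (hM : M.PosSemidef) {c : ℂ} (hc : 0 ≤ c) :
    (c • M).PosSemidef := by
  have him : c.im = 0 := (Complex.nonneg_iff.mp hc).2.symm
  refine Matrix.PosSemidef.of_dotProduct_mulVec_nonneg ?_ ?_
  · unfold Matrix.IsHermitian
    rw [conjTranspose_smul, hM.1.eq, Complex.star_def, Complex.conj_eq_iff_im.mpr him]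
  · intro x
    rw [smul_mulVec, dotProduct_smul, smul_eq_mul]
    exact mul_nonneg hc (hM.dotProduct_mulVec_nonneg x)

lemma key_expand (Z : Matrix m n ℂ) (A : Matrix n n ℂ) (hA : Aᴴ = A) (hZ : Zᴴ * Z = 1 - A)
    (c : ℂ) (hc : star c = c) :
    1 - (Z + c • (Z * A))ᴴ * (Z + c • (Z * A)) =
      (1 - 2*c) • A + (2*c - c^2) • (A * A) + (c^2) • (A * (A * A)) := by
  have e1 : Zᴴ * (Z * A) = (1 - A) * A := by rw [← Matrix.mul_assoc, hZ]
  have e2 : (Z * A)ᴴ * Z = A * (1 - A) := by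
    rw [conjTranspose_mul, hA, Matrix.mul_assoc, hZ]
  have e3 : (Z * A)ᴴ * (Z * A) = A * ((1 - A) * A) := by
    rw [conjTranspose_mul, hA, Matrix.mul_assoc, ← Matrix.mul_assoc Zᴴ, hZ]
  simp only [conjTranspose_add, conjTranspose_smul, Matrix.add_mul, Matrix.mul_add,
    Matrix.smul_mul, Matrix.mul_smul, smul_smul, hZ, e1, e2, e3, hc, Matrix.sub_mul,
    Matrix.mul_sub, Matrix.one_mul, Matrix.mul_one]
  module

lemma minus_id (A : Matrix n n ℂ) (hA : Aᴴ = A) :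
    (3/2 : ℂ) • A + (-(9/16) : ℂ) • (A * A) + ((1/16) : ℂ) • (A * (A * A)) =
      ((1/2 : ℂ)) • ((1 - A)ᴴ * A * (1 - A)) + ((7/16 : ℂ)) • (Aᴴ * (1 - A) * A) + A := by
  simp only [conjTranspose_sub, conjTranspose_one, hA, Matrix.mul_sub, Matrix.sub_mul,
    Matrix.mul_one, Matrix.one_mul, Matrix.mul_assoc]
  module

/-- normalization of a nonzero vector -/
lemma normalize_vec (w : n → ℂ) (hw : w ≠ 0) :
    ∃ w' : n → ℂ, star w' ⬝ᵥ w' = 1 ∧ ∃ c : ℂ, c ≠ 0 ∧ w' = c • w := by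
  set s : ℂ := star w ⬝ᵥ w with hs
  have hs0 : s ≠ 0 := fun h => hw (dotProduct_star_self_eq_zero.mp h)
  have hsnn : 0 ≤ s := dotProduct_star_self_nonneg w
  obtain ⟨hre, him⟩ := Complex.nonneg_iff.mp hsnn
  have hrepos : 0 < s.re := lt_of_le_of_ne hre (by
    intro h; exact hs0 (Complex.ext h.symm him.symm))
  set r : ℝ := (Real.sqrt s.re)⁻¹ with hr
  have hrne : r ≠ 0 := by positivity
  refine ⟨(r : ℂ) • w, ?_, (r : ℂ), by exact_mod_cast hrne, rfl⟩
  have heq : star ((r:ℂ) • w) ⬝ᵥ ((r:ℂ) • w) = (r:ℂ) * ((r:ℂ) * s) := by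
    rw [star_smul, smul_dotProduct, dotProduct_smul, smul_eq_mul, smul_eq_mul,
      Complex.star_def, Complex.conj_ofReal]
  rw [heq]
  have hsval : s = (s.re : ℂ) := Complex.ext rfl (by simp [him.symm])
  rw [hsval, ← Complex.ofReal_mul, ← Complex.ofReal_mul]
  norm_cast
  rw [hr, ← mul_assoc, ← Real.sqrt_inv, Real.mul_self_sqrt (by positivity)]
  field_simp

lemma real_smul_matrix (r : ℝ) (M : Matrix m n ℂ) : r • M = (r : ℂ) • M := by
  ext i j
  simp [Matrix.smul_apply, Complex.real_smul]

lemma convex_id (X Y : Matrix m n ℂ) (a : ℂ) (ha : star a = a) :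
    (a • (1 - Xᴴ*X) + (1-a) • (1 - Yᴴ*Y)) + (a*(1-a)) • ((X-Y)ᴴ*(X-Y)) =
      1 - (a•X + (1-a)•Y)ᴴ*(a•X + (1-a)•Y) := by
  have hsb : star (1 - a) = 1 - a := by rw [star_sub, star_one, ha]
  simp only [conjTranspose_add, conjTranspose_smul, conjTranspose_sub, Matrix.add_mul,
    Matrix.mul_add, Matrix.sub_mul, Matrix.mul_sub, Matrix.smul_mul, Matrix.mul_smul,
    smul_smul, ha, hsb]
  module

lemma scalar_zero {a b : ℝ} (ha : 0 < a) (hb : 0 < b) {α β γ : ℂ}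
    (hα : 0 ≤ α) (hβ : 0 ≤ β) (hγ : 0 ≤ γ)
    (h : (a:ℂ) * α + (b:ℂ) * β + ((a:ℂ)*(b:ℂ)) * γ = 0) : γ = 0 := by
  rw [Complex.nonneg_iff] at hα hβ hγ
  have hre := congrArg Complex.re h
  simp only [Complex.add_re, Complex.mul_re, Complex.ofReal_re, Complex.ofReal_im,
    Complex.zero_re, Complex.mul_im, zero_mul, mul_zero, sub_zero, zero_sub, zero_add,
    ← hα.2, ← hβ.2, ← hγ.2] at hre
  have h1 : 0 ≤ a * α.re := mul_nonneg ha.le hα.1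
  have h2 : 0 ≤ b * β.re := mul_nonneg hb.le hβ.1
  have h3 : a * b * γ.re ≤ 0 := by linarith
  have h4 : γ.re ≤ 0 := by
    by_contra hc
    push_neg at hc
    nlinarith [mul_pos ha hb]
  have : γ.re = 0 := le_antisymm h4 hγ.1
  exact Complex.ext this hγ.2.symm

/-- zero matrix from vanishing quadratic form (psd) -/
lemma psd_eq_zero {M : Matrix n n ℂ} (hM : M.PosSemidef)
    (h : ∀ x : n → ℂ, star x ⬝ᵥ (M *ᵥ x) = 0) : M = 0 := by
  have h0 : ∀ x, M *ᵥ x = 0 := fun x => (hM.dotProduct_mulVec_zero_iff x).mp (h x)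
  ext i j
  simpa [mulVec_single] using congrFun (h0 (Pi.single j 1)) i

lemma mul_vecMulVec_eq_zero (M : Matrix n m ℂ) (u : m → ℂ) (w : n → ℂ) (hu : M *ᵥ u = 0) :
    M * vecMulVec u (star w) = 0 := by
  have h : ∀ i, ∑ k, M i k * u k = 0 := fun i => by
    simpa [mulVec, dotProduct] using congrFun hu i
  ext i j
  simp only [Matrix.mul_apply, vecMulVec_apply, Matrix.zero_apply, Pi.star_apply,
    ← mul_assoc, ← Finset.sum_mul, h, zero_mul]

end Helpers

section Cases

variable {p q : ℕ}

/-- Case 1: `Z * (1 - ZᴴZ) ≠ 0`. -/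
lemma case_one (Z : Matrix (Fin p) (Fin q) ℂ) (hpsd : (1 - Zᴴ * Z).PosSemidef)
    (hZA : Z * (1 - Zᴴ * Z) ≠ 0) :
    ∃ W : Matrix (Fin p) (Fin q) ℂ, W ≠ 0 ∧ (1 - (Z + W)ᴴ * (Z + W)).PosSemidef ∧
      (1 - (Z - W)ᴴ * (Z - W)).PosSemidef := by
  set A : Matrix (Fin q) (Fin q) ℂ := 1 - Zᴴ * Z with hAdef
  have hAh : Aᴴ = A := hpsd.isHermitian.eq
  have hZeq : Zᴴ * Z = 1 - A := by rw [hAdef, sub_sub_cancel]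
  have hNpsd : (1 - A).PosSemidef := by
    rw [← hZeq]; exact posSemidef_conjTranspose_mul_self Z
  refine ⟨(4⁻¹ : ℂ) • (Z * A), ?_, ?_, ?_⟩
  · simpa using hZA
  · have hk := key_expand Z A hAh hZeq (4⁻¹ : ℂ) (by norm_num)
    rw [hk]
    have hAA : (A * A).PosSemidef := by
      nth_rewrite 1 [← hAh]; exact posSemidef_conjTranspose_mul_self A
    have hAAA : (A * (A * A)).PosSemidef := by
      have := hpsd.conjTranspose_mul_mul_same (B := A)
      rwa [hAh, Matrix.mul_assoc] at this
    refine ((psd_csmul hpsd ?_).add (psd_csmul hAA ?_)).add (psd_csmul hAAA ?_) <;>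
      · rw [Complex.le_def]; norm_num
  · have hk := key_expand Z A hAh hZeq (-4⁻¹ : ℂ) (by simp)
    rw [show Z - (4⁻¹:ℂ) • (Z * A) = Z + (-4⁻¹:ℂ) • (Z*A) by
      rw [neg_smul, ← sub_eq_add_neg], hk]
    have hcoef : (1 - 2*(-4⁻¹:ℂ)) = (3/2 : ℂ) := by norm_num
    have hcoef2 : (2*(-4⁻¹:ℂ) - (-4⁻¹:ℂ)^2) = (-(9/16) : ℂ) := by norm_num
    have hcoef3 : ((-4⁻¹:ℂ)^2) = ((1/16) : ℂ) := by norm_num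
    rw [hcoef, hcoef2, hcoef3, minus_id A hAh]
    have h1 : ((1 - A)ᴴ * A * (1 - A)).PosSemidef := hpsd.conjTranspose_mul_mul_same _
    have h2 : (Aᴴ * (1 - A) * A).PosSemidef := hNpsd.conjTranspose_mul_mul_same _
    refine ((psd_csmul h1 ?_).add (psd_csmul h2 ?_)).add hpsd <;>
      · rw [Complex.le_def]; norm_num

/-- Case 2: `Z * (1 - ZᴴZ) = 0` but `ZᴴZ ≠ 1`. -/
lemma case_two (hqp : q ≤ p) (Z : Matrix (Fin p) (Fin q) ℂ)
    (hne : Zᴴ * Z ≠ 1) (hZA : Z * (1 - Zᴴ * Z) = 0) :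
    ∃ W : Matrix (Fin p) (Fin q) ℂ, W ≠ 0 ∧ (1 - (Z + W)ᴴ * (Z + W)).PosSemidef ∧
      (1 - (Z - W)ᴴ * (Z - W)).PosSemidef := by
  classical
  set N : Matrix (Fin q) (Fin q) ℂ := Zᴴ * Z with hNdef
  have hNh : Nᴴ = N := (isHermitian_conjTranspose_mul_self Z).eq
  have hNmul : N * (1 - N) = 0 := by
    have h' : N * (1 - N) = Zᴴ * (Z * (1 - N)) := by rw [hNdef, Matrix.mul_assoc]
    rw [h', hZA, Matrix.mul_zero]
  have hNN : N * N = N := by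
    have h' := hNmul
    rw [Matrix.mul_sub, Matrix.mul_one, sub_eq_zero] at h'
    exact h'.symm
  have hAne : (1 : Matrix (Fin q) (Fin q) ℂ) - N ≠ 0 := fun h => hne (by
    rw [sub_eq_zero] at h; exact h.symm)
  obtain ⟨v₀, hv₀⟩ : ∃ v, ((1 : Matrix (Fin q) (Fin q) ℂ) - N) *ᵥ v ≠ 0 := by
    by_contra h
    push_neg at h
    apply hAne
    ext i j
    simpa [mulVec_single] using congrFun (h (Pi.single j 1)) i
  set w₀ : Fin q → ℂ := ((1 : Matrix (Fin q) (Fin q) ℂ) - N) *ᵥ v₀ with hw₀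
  have hNw₀ : N *ᵥ w₀ = 0 := by
    rw [hw₀, mulVec_mulVec, hNmul, zero_mulVec]
  have hZw₀ : Z *ᵥ w₀ = 0 :=
    (conjTranspose_mul_self_mulVec_eq_zero Z w₀).mp (by rw [← hNdef, hNw₀])
  obtain ⟨w, sw, cw, hcw, hwdef⟩ := normalize_vec w₀ hv₀
  have hNw : N *ᵥ w = 0 := by rw [hwdef, mulVec_smul, hNw₀, smul_zero]
  have hZw : Z *ᵥ w = 0 := by rw [hwdef, mulVec_smul, hZw₀, smul_zero]
  have hwne : w ≠ 0 := fun h => by rw [h] at sw; simp at sw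
  -- a nonzero kernel vector for Zᴴ
  obtain ⟨u₀, hu₀ne, hu₀⟩ : ∃ u : Fin p → ℂ, u ≠ 0 ∧ Zᴴ *ᵥ u = 0 := by
    by_contra h
    push_neg at h
    have hinj : Function.Injective Zᴴ.mulVecLin := by
      rw [← LinearMap.ker_eq_bot, LinearMap.ker_eq_bot']
      intro v hv
      by_contra hvne
      exact (h v hvne) (by simpa [Matrix.mulVecLin_apply] using hv)
    have hrankH : Zᴴ.rank = p := by
      rw [Matrix.rank, LinearMap.finrank_range_of_inj hinj,
        Module.finrank_fintype_fun_eq_card, Fintype.card_fin]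
    have hrk : Z.rank + Module.finrank ℂ (LinearMap.ker Z.mulVecLin) = q := by
      have := LinearMap.finrank_range_add_finrank_ker Z.mulVecLin
      rwa [Module.finrank_fintype_fun_eq_card, Fintype.card_fin] at this
    have hkpos : 0 < Module.finrank ℂ (LinearMap.ker Z.mulVecLin) := by
      rcases Nat.eq_zero_or_pos (Module.finrank ℂ (LinearMap.ker Z.mulVecLin)) with h0 | h0
      · exfalso
        have hbot : LinearMap.ker Z.mulVecLin = ⊥ := Submodule.finrank_eq_zero.mp h0
        have hmem : w ∈ LinearMap.ker Z.mulVecLin := by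
          simp [LinearMap.mem_ker, Matrix.mulVecLin_apply, hZw]
        rw [hbot, Submodule.mem_bot] at hmem
        exact hwne hmem
      · exact h0
    have := Matrix.rank_conjTranspose Z
    omega
  obtain ⟨u, su, cu, hcu, hudef⟩ := normalize_vec u₀ hu₀ne
  have hu : Zᴴ *ᵥ u = 0 := by rw [hudef, mulVec_smul, hu₀, smul_zero]
  have hune : u ≠ 0 := fun h => by rw [h] at su; simp at su
  set W : Matrix (Fin p) (Fin q) ℂ := vecMulVec u (star w) with hWdef
  set P : Matrix (Fin q) (Fin q) ℂ := vecMulVec w (star w) with hPdef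
  have hPh : Pᴴ = P := by
    ext i j
    simp [hPdef, conjTranspose_apply, vecMulVec_apply, star_mul', star_star, mul_comm]
  have hZW : Zᴴ * W = 0 := mul_vecMulVec_eq_zero Zᴴ u w hu
  have hWZ : Wᴴ * Z = 0 := by
    have h' : (Zᴴ * W)ᴴ = Wᴴ * Z := by rw [conjTranspose_mul, conjTranspose_conjTranspose]
    rw [← h', hZW, conjTranspose_zero]
  have hWW : Wᴴ * W = P := by
    ext i j
    simp only [hWdef, hPdef, Matrix.mul_apply, conjTranspose_apply, vecMulVec_apply,
      Pi.star_apply, star_mul', star_star]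
    have h1 : ∀ k, star (u k) * w i * (u k * star (w j)) =
        (star (u k) * u k) * (w i * star (w j)) := fun k => by ring
    rw [Finset.sum_congr rfl (fun k _ => h1 k), ← Finset.sum_mul]
    have h2 : ∑ k, star (u k) * u k = 1 := by simpa [dotProduct] using su
    rw [h2, one_mul]
  have hNP : N * P = 0 := mul_vecMulVec_eq_zero N w w hNw
  have hPN : P * N = 0 := by
    have h' : (N * P)ᴴ = Pᴴ * Nᴴ := conjTranspose_mul N P
    rw [hNP, hPh, hNh, conjTranspose_zero] at h'
    exact h'.symm
  have hPP : P * P = P := by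
    ext i j
    simp only [hPdef, Matrix.mul_apply, vecMulVec_apply, Pi.star_apply]
    have h1 : ∀ k, w i * star (w k) * (w k * star (w j)) =
        (star (w k) * w k) * (w i * star (w j)) := fun k => by ring
    rw [Finset.sum_congr rfl (fun k _ => h1 k), ← Finset.sum_mul]
    have h2 : ∑ k, star (w k) * w k = 1 := by simpa [dotProduct] using sw
    rw [h2, one_mul]
  have hkey : (1 - (N + P)).PosSemidef := by
    have hid2 : (1 - P : Matrix (Fin q) (Fin q) ℂ)ᴴ * (1 - P) = 1 - P := by
      simp only [conjTranspose_sub, conjTranspose_one, hPh, Matrix.mul_sub, Matrix.sub_mul,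
        Matrix.mul_one, Matrix.one_mul, hPP]
      abel
    have h1P : (1 - P : Matrix (Fin q) (Fin q) ℂ).PosSemidef := by
      have := posSemidef_conjTranspose_mul_self (1 - P : Matrix (Fin q) (Fin q) ℂ)
      rwa [hid2] at this
    have hid : (1 - N)ᴴ * (1 - P) * (1 - N) = 1 - (N + P) := by
      simp only [conjTranspose_sub, conjTranspose_one, hNh, Matrix.mul_sub, Matrix.sub_mul,
        Matrix.one_mul, Matrix.mul_one, hNN, hNP, hPN, sub_zero]
      abel
    have := h1P.conjTranspose_mul_mul_same (B := (1 - N : Matrix (Fin q) (Fin q) ℂ))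
    rwa [hid] at this
  have hplus : (Z + W)ᴴ * (Z + W) = N + P := by
    rw [conjTranspose_add, Matrix.add_mul, Matrix.mul_add, Matrix.mul_add,
      hZW, hWZ, hWW, ← hNdef]
    abel
  have hminus : (Z - W)ᴴ * (Z - W) = N + P := by
    rw [conjTranspose_sub, Matrix.sub_mul, Matrix.mul_sub, Matrix.mul_sub,
      hZW, hWZ, hWW, ← hNdef]
    abel
  refine ⟨W, ?_, ?_, ?_⟩
  · obtain ⟨i, hi⟩ := Function.ne_iff.mp hune
    obtain ⟨j, hj⟩ := Function.ne_iff.mp hwne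
    intro h
    have := congrFun (congrFun h i) j
    simp only [hWdef, vecMulVec_apply, Pi.star_apply, Matrix.zero_apply] at this
    exact (mul_ne_zero hi (star_ne_zero.mpr hj)) this
  · rw [hplus]; exact hkey
  · rw [hminus]; exact hkey

end Cases

/-- The set of extreme points of the compact convex set
`closure(D_{p,q}) = {Z : I - Z*Z positive semidefinite}` is the Shilov boundary
`S_{p,q,0} = {Z : Z*Z = I}`. -/
theorem stmt13 (p q : ℕ) (hq : 1 ≤ q) (hqp : q ≤ p) :
    Set.extremePoints ℝ {Z : Matrix (Fin p) (Fin q) ℂ | (1 - Zᴴ * Z).PosSemidef}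
      = {Z : Matrix (Fin p) (Fin q) ℂ | Zᴴ * Z = 1} := by
  ext Z
  simp only [mem_extremePoints, Set.mem_setOf_eq]
  constructor
  · rintro ⟨hmem, hext⟩
    by_contra hne
    obtain ⟨W, hWne, h₁, h₂⟩ :
        ∃ W : Matrix (Fin p) (Fin q) ℂ, W ≠ 0 ∧ (1 - (Z + W)ᴴ * (Z + W)).PosSemidef ∧
          (1 - (Z - W)ᴴ * (Z - W)).PosSemidef := by
      by_cases hZA : Z * (1 - Zᴴ * Z) = 0
      · exact case_two hqp Z hne hZA
      · exact case_one Z hmem hZA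
    have hseg : Z ∈ openSegment ℝ (Z + W) (Z - W) := by
      refine ⟨1/2, 1/2, by norm_num, by norm_num, by norm_num, ?_⟩
      module
    obtain ⟨h1, _⟩ := hext (Z + W) h₁ (Z - W) h₂ hseg
    exact hWne (by simpa [add_eq_left] using h1)
  · intro hZ
    refine ⟨show ((1:Matrix (Fin q) (Fin q) ℂ) - Zᴴ * Z).PosSemidef by
      rw [hZ, sub_self]; exact Matrix.PosSemidef.zero, ?_⟩
    rintro X hX Y hY ⟨a, b, ha, hb, hab, hsum⟩
    have hbeq : b = 1 - a := by linarith
    subst hbeq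
    have hXY : X = Y := by
      have hid := convex_id X Y ((a:ℂ)) (by rw [Complex.star_def, Complex.conj_ofReal])
      have hz' : (a:ℂ) • X + ((1:ℂ) - (a:ℂ)) • Y = Z := by
        rw [← hsum, real_smul_matrix, real_smul_matrix]
        push_cast
        rfl
      rw [hz', hZ, sub_self] at hid
      have hCpsd : ((X - Y)ᴴ * (X - Y)).PosSemidef := posSemidef_conjTranspose_mul_self _
      have hC : (X - Y)ᴴ * (X - Y) = 0 := by
        apply psd_eq_zero hCpsd
        intro x
        have hq := congrArg (fun M => star x ⬝ᵥ (M *ᵥ x)) hid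
        simp only [add_mulVec, smul_mulVec, dotProduct_add, dotProduct_smul,
          smul_eq_mul, zero_mulVec, dotProduct_zero] at hq
        have hcast : ((1:ℂ) - (a:ℂ)) = ((1 - a : ℝ) : ℂ) := by push_cast; ring
        rw [hcast] at hq
        have hX' : ((1:Matrix (Fin q) (Fin q) ℂ) - Xᴴ * X).PosSemidef := hX
        have hY' : ((1:Matrix (Fin q) (Fin q) ℂ) - Yᴴ * Y).PosSemidef := hY
        exact scalar_zero ha (by linarith : (0:ℝ) < 1 - a) (hX'.dotProduct_mulVec_nonneg x) (hY'.dotProduct_mulVec_nonneg x)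
          (hCpsd.dotProduct_mulVec_nonneg x) hq
      have := conjTranspose_mul_self_eq_zero.mp hC
      exact sub_eq_zero.mp this
    have hXZ : X = Z := by
      rw [← hXY] at hsum
      rw [← hsum, ← add_smul, show a + (1-a) = 1 by ring, one_smul]
    exact ⟨hXZ, hXY ▸ hXZ⟩
end
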